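/- M ≺ V_λ is an ℵ₀-guessing model if and only if its transitive collapse is V_γ for some ordinal γ. -/

import Mathlib

open Cardinal

namespace GuessingModels

/-- First-order formulas in the language of set theory (membership and equality),
with `n` free variables. -/
inductive SF : ℕ → Type
  | mem {n} (i j : Fin n) : SF n
  | eq {n} (i j : Fin n) : SF n
  | imp {n} (f g : SF n) : SF n
  | not {n} (f : SF n) : SF n
  | ex {n} (f : SF (n + 1)) : SF n

/-- Tarskian satisfaction of a set-theoretic formula in the structure `⟨S, ∈⟩`,
where `S` is a class of ZF sets. -/
def Realize (S : Set ZFSet) : ∀ {n}, SF n → (Fin n → ZFSet) → Prop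
  | _, .mem i j, v => v i ∈ v j
  | _, .eq i j, v => v i = v j
  | _, .imp f g, v => Realize S f v → Realize S g v
  | _, .not f, v => ¬ Realize S f v
  | _, .ex f, v => ∃ x ∈ S, Realize S f (Fin.cons x v)

/-- `M ≺ R` : `M` is an elementary substructure of `⟨R, ∈⟩`. -/
def Prec (M R : Set ZFSet) : Prop :=
  M ⊆ R ∧ ∀ {n : ℕ} (φ : SF n) (v : Fin n → ZFSet), (∀ i, v i ∈ M) →
    (Realize M φ v ↔ Realize R φ v)

/-- A (von Neumann) ordinal: a transitive set of transitive sets. -/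
def IsOrd (x : ZFSet) : Prop :=
  x.IsTransitive ∧ ∀ y ∈ x, ZFSet.IsTransitive y

/-- `≤` on ordinals, i.e. `∈` or `=`. -/
def ole (a b : ZFSet) : Prop := a ∈ b ∨ a = b

/-- The cardinality of (the extension of) a ZF set. -/
noncomputable def card (x : ZFSet) : Cardinal := Cardinal.mk x.toSet

/-- A ZF set which is a cardinal: an ordinal not equinumerous with any of its members. -/
def IsCard (κ : ZFSet) : Prop := IsOrd κ ∧ ∀ β ∈ κ, card β < card κ

/-- `s` (an external class) is a cofinal subset of the ordinal `κ`. -/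
def CofinalSetIn (s : Set ZFSet) (κ : ZFSet) : Prop :=
  (∀ x ∈ s, x ∈ κ) ∧ ∀ β ∈ κ, ∃ γ ∈ s, ole β γ

/-- A regular cardinal: an infinite cardinal all of whose cofinal subsets have full size. -/
def IsRegCard (κ : ZFSet) : Prop :=
  IsCard κ ∧ ZFSet.omega ⊆ κ ∧
    ∀ s : Set ZFSet, CofinalSetIn s κ → Cardinal.mk s = card κ

/-- A strong limit ZF cardinal. -/
def IsStrongLimit (κ : ZFSet) : Prop := ∀ β ∈ κ, (2 : Cardinal) ^ card β < card κ

/-- A strongly inaccessible cardinal: regular, uncountable and strong limit. -/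
def IsInacc (κ : ZFSet) : Prop := IsRegCard κ ∧ ZFSet.omega ∈ κ ∧ IsStrongLimit κ

/-- The transitive closure of a ZF set, as a class. -/
def tcl (x : ZFSet) : Set ZFSet := {y | Relation.TransGen (· ∈ ·) y x}

/-- `H_θ` : the class of sets hereditarily of size `< θ`. -/
noncomputable def HSet (θ : ZFSet) : Set ZFSet := {x | Cardinal.mk (tcl x) < card θ}

/-- `V_α` as a class, for `α` an ordinal (as a ZF set): sets of rank `< α`. -/
noncomputable def VSet (α : ZFSet) : Set ZFSet := {x | x.rank < α.rank}

/-- A suitable initial segment: `H_θ` for a regular cardinal `θ`, or a rank initial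
segment `V_α`. -/
def Suitable (R : Set ZFSet) : Prop :=
  (∃ θ : ZFSet, IsRegCard θ ∧ R = HSet θ) ∨ (∃ α : ZFSet, IsOrd α ∧ R = VSet α)

/-- `κ = κ_M` : `κ` is the least ordinal in `M` with `M ∩ κ ≠ κ`. -/
def KappaSpec (M : Set ZFSet) (κ : ZFSet) : Prop :=
  IsOrd κ ∧ κ ∈ M ∧ (∃ β ∈ κ, β ∉ M) ∧
    ∀ α : ZFSet, IsOrd α → α ∈ M → (∃ β ∈ α, β ∉ M) → ole κ α

/-- `d` is `(δ, M)`-approximated: `d ∩ Z ∈ M` for every `Z ∈ M` of size `< δ`. -/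
noncomputable def Approx (M : Set ZFSet) (δ : Cardinal.{1}) (d : ZFSet) : Prop :=
  ∀ Z : ZFSet, Z ∈ M → card Z < δ → (d ∩ Z) ∈ M

/-- `d ⊆ X` is `M`-guessed: `d ∩ M = e ∩ M` for some `e ∈ M ∩ P(X)`. -/
def Guessed (M : Set ZFSet) (X d : ZFSet) : Prop :=
  ∃ e : ZFSet, e ∈ M ∧ e ⊆ X ∧ ∀ z ∈ M, (z ∈ e ↔ z ∈ d)

/-- `M` is a `δ`-guessing model: every `(δ,M)`-approximated subset of any `X ∈ M`
is `M`-guessed. -/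
noncomputable def GuessingModel (M : Set ZFSet) (δ : Cardinal.{1}) : Prop :=
  ∀ X ∈ M, ∀ d : ZFSet, d ⊆ X → Approx M δ d → Guessed M X d

/-- `M` is `ℵ₁`-internally unbounded: every countable subset of `M` is contained
in a countable element of `M`. -/
noncomputable def IntUnb (M : Set ZFSet) : Prop :=
  ∀ A : Set ZFSet, A ⊆ M → A.Countable → ∃ z ∈ M, card z ≤ ℵ₀ ∧ A ⊆ z.toSet

/-! ### Formula combinators -/

namespace SF

def and {n} (f g : SF n) : SF n := .not (.imp f (.not g))
def or {n} (f g : SF n) : SF n := .imp (.not f) g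
def iff {n} (f g : SF n) : SF n := (f.imp g).and (g.imp f)
def all {n} (f : SF (n + 1)) : SF n := .not (.ex (.not f))
def ball {n} (i : Fin n) (f : SF (n + 1)) : SF n := all ((SF.mem 0 i.succ).imp f)
def bex {n} (i : Fin n) (f : SF (n + 1)) : SF n := .ex ((SF.mem 0 i.succ).and f)

def rename : ∀ {n m}, (Fin n → Fin m) → SF n → SF m
  | _, _, ρ, .mem i j => .mem (ρ i) (ρ j)
  | _, _, ρ, .eq i j => .eq (ρ i) (ρ j)
  | _, _, ρ, .imp f g => .imp (rename ρ f) (rename ρ g)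
  | _, _, ρ, .not f => .not (rename ρ f)
  | _, _, ρ, .ex f => .ex (rename (Fin.cases 0 (fun i => (ρ i).succ)) f)

def rel : ∀ {n}, Fin n → SF n → SF n
  | _, _, .mem i j => .mem i j
  | _, _, .eq i j => .eq i j
  | _, p, .imp f g => .imp (rel p f) (rel p g)
  | _, p, .not f => .not (rel p f)
  | _, p, .ex f => .ex ((SF.mem 0 p.succ).and (rel p.succ f))

end SF

section RealizeLemmas

variable {S : Set ZFSet} {n : ℕ}

@[simp] theorem realize_mem (i j : Fin n) (v : Fin n → ZFSet) :
    Realize S (.mem i j) v ↔ v i ∈ v j := Iff.rfl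

@[simp] theorem realize_eq (i j : Fin n) (v : Fin n → ZFSet) :
    Realize S (.eq i j) v ↔ v i = v j := Iff.rfl

@[simp] theorem realize_imp (f g : SF n) (v : Fin n → ZFSet) :
    Realize S (f.imp g) v ↔ (Realize S f v → Realize S g v) := Iff.rfl

@[simp] theorem realize_not (f : SF n) (v : Fin n → ZFSet) :
    Realize S (f.not) v ↔ ¬ Realize S f v := Iff.rfl

@[simp] theorem realize_ex (f : SF (n + 1)) (v : Fin n → ZFSet) :
    Realize S (f.ex) v ↔ ∃ x ∈ S, Realize S f (Fin.cons x v) := Iff.rfl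

@[simp] theorem realize_and (f g : SF n) (v : Fin n → ZFSet) :
    Realize S (f.and g) v ↔ (Realize S f v ∧ Realize S g v) := by
  simp only [SF.and, realize_not, realize_imp]; tauto

@[simp] theorem realize_or (f g : SF n) (v : Fin n → ZFSet) :
    Realize S (f.or g) v ↔ (Realize S f v ∨ Realize S g v) := by
  simp only [SF.or, realize_not, realize_imp]; tauto

@[simp] theorem realize_iff (f g : SF n) (v : Fin n → ZFSet) :
    Realize S (f.iff g) v ↔ (Realize S f v ↔ Realize S g v) := by
  simp only [SF.iff, realize_and, realize_imp]; tauto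

@[simp] theorem realize_all (f : SF (n + 1)) (v : Fin n → ZFSet) :
    Realize S (f.all) v ↔ ∀ x ∈ S, Realize S f (Fin.cons x v) := by
  simp only [SF.all, realize_not, realize_ex]; push_neg; tauto

@[simp] theorem realize_ball (i : Fin n) (f : SF (n + 1)) (v : Fin n → ZFSet) :
    Realize S (SF.ball i f) v ↔ ∀ x ∈ S, x ∈ v i → Realize S f (Fin.cons x v) := by
  simp [SF.ball]

@[simp] theorem realize_bex (i : Fin n) (f : SF (n + 1)) (v : Fin n → ZFSet) :
    Realize S (SF.bex i f) v ↔ ∃ x ∈ S, x ∈ v i ∧ Realize S f (Fin.cons x v) := by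
  simp [SF.bex]

theorem zmem_toSet {x y : ZFSet} : x ∈ y.toSet ↔ x ∈ y := Iff.rfl

theorem realize_rename : ∀ {n m : ℕ} (ρ : Fin n → Fin m) (f : SF n) (v : Fin m → ZFSet),
    Realize S (SF.rename ρ f) v ↔ Realize S f (v ∘ ρ)
  | _, _, ρ, .mem i j, v => Iff.rfl
  | _, _, ρ, .eq i j, v => Iff.rfl
  | _, _, ρ, .imp f g, v => by
      simp only [SF.rename, realize_imp, realize_rename]
  | _, _, ρ, .not f, v => by
      simp only [SF.rename, realize_not, realize_rename]
  | _, _, ρ, .ex f, v => by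
      simp only [SF.rename, realize_ex, realize_rename]
      refine exists_congr fun x => and_congr_right fun _ => iff_of_eq (congrArg _ ?_)
      funext i
      refine Fin.cases ?_ (fun j => ?_) i <;> simp

theorem realize_rel : ∀ {n : ℕ} (p : Fin n) (f : SF n) (v : Fin n → ZFSet),
    Realize S (SF.rel p f) v ↔ Realize (S ∩ (v p).toSet) f v
  | _, p, .mem i j, v => Iff.rfl
  | _, p, .eq i j, v => Iff.rfl
  | _, p, .imp f g, v => by
      simp only [SF.rel, realize_imp, realize_rel]
  | _, p, .not f, v => by
      simp only [SF.rel, realize_not, realize_rel]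
  | _, p, .ex f, v => by
      simp only [SF.rel, realize_ex, realize_and, realize_mem, realize_rel]
      constructor
      · rintro ⟨x, hxS, hxp, h⟩
        refine ⟨x, ⟨hxS, ?_⟩, ?_⟩
        · simpa [zmem_toSet] using hxp
        · simpa using h
      · rintro ⟨x, ⟨hxS, hxp⟩, h⟩
        refine ⟨x, hxS, ?_, ?_⟩
        · simpa [zmem_toSet] using hxp
        · simpa using h

/-- Relativization with one extra parameter slot (the bounding set at position 0). -/
def SFrelv {n} (f : SF n) : SF (n + 1) := SF.rel 0 (SF.rename Fin.succ f)

theorem realize_relv {n} (f : SF n) (b : ZFSet) (v : Fin n → ZFSet) :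
    Realize S (SFrelv f) (Fin.cons b v) ↔ Realize (S ∩ b.toSet) f v := by
  rw [SFrelv, realize_rel, realize_rename]
  simp only [Fin.cons_zero]
  refine iff_of_eq (congrArg _ ?_)
  funext i; simp

end RealizeLemmas
/-! ### ZFSet infrastructure -/

@[simp] theorem fin_cons_two_aux {α : Type*} {n : ℕ} (x : α) (v : Fin (n + 2) → α) :
    (Fin.cons x v : Fin (n + 3) → α) 2 = v 1 := rfl

open ZFSet in
noncomputable def zimage (f : ZFSet → ZFSet) (x : ZFSet) : ZFSet :=
  @ZFSet.image f (Classical.allZFSetDefinable _) x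

theorem mem_zimage {f : ZFSet → ZFSet} {x y : ZFSet} :
    y ∈ zimage f x ↔ ∃ z ∈ x, f z = y :=
  @ZFSet.mem_image f (Classical.allZFSetDefinable _) x y

theorem zsubset_iff {x y : ZFSet} : x ⊆ y ↔ ∀ ⦃z⦄, z ∈ x → z ∈ y := ZFSet.subset_def

theorem rank_le_of_subset {x y : ZFSet} (h : x ⊆ y) : x.rank ≤ y.rank := ZFSet.rank_mono h

theorem sep_subset' (p : ZFSet → Prop) (x : ZFSet) : ZFSet.sep p x ⊆ x :=
  zsubset_iff.2 fun z hz => (ZFSet.mem_sep.1 hz).1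

/-- generic epsilon-recursion returning a ZFSet -/
noncomputable def zrec (F : ZFSet → (ZFSet → ZFSet) → ZFSet) : ZFSet → ZFSet :=
  ZFSet.mem_wf.fix fun x rec =>
    F x (fun y => @dite _ (y ∈ x) (Classical.propDecidable _) (fun h => rec y h) (fun _ => ∅))

theorem zrec_eq (F : ZFSet → (ZFSet → ZFSet) → ZFSet) (x : ZFSet) :
    zrec F x = F x (fun y =>
      @dite _ (y ∈ x) (Classical.propDecidable _) (fun _ => zrec F y) (fun _ => ∅)) := by
  rw [zrec, WellFounded.fix_eq]

/-! #### transitive closure -/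

open ZFSet in
noncomputable def tcl' : ZFSet → ZFSet :=
  zrec fun x rec => x ∪ ⋃₀ zimage rec x

theorem mem_tcl' {x z : ZFSet} : z ∈ tcl' x ↔ z ∈ x ∨ ∃ y ∈ x, z ∈ tcl' y := by
  rw [tcl', zrec_eq]
  simp only [ZFSet.mem_union, ZFSet.mem_sUnion, mem_zimage]
  constructor
  · rintro (h | ⟨w, ⟨y, hy, rfl⟩, hw⟩)
    · exact Or.inl h
    · rw [dif_pos hy] at hw; exact Or.inr ⟨y, hy, hw⟩
  · rintro (h | ⟨y, hy, hw⟩)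
    · exact Or.inl h
    · exact Or.inr ⟨_, ⟨y, hy, rfl⟩, by rwa [dif_pos hy]⟩

theorem subset_tcl' {x : ZFSet} : x ⊆ tcl' x :=
  zsubset_iff.2 fun z hz => mem_tcl'.2 (Or.inl hz)

theorem tcl'_transitive (x : ZFSet) : (tcl' x).IsTransitive := by
  induction x using ZFSet.inductionOn with
  | _ x IH =>
    intro y hy
    rcases mem_tcl'.1 hy with h | ⟨w, hw, h⟩
    · intro z hz
      exact mem_tcl'.2 (Or.inr ⟨y, h, zsubset_iff.1 subset_tcl' hz⟩)
    · intro z hz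
      exact mem_tcl'.2 (Or.inr ⟨w, hw, zsubset_iff.1 (IH w hw y h) hz⟩)

theorem rank_tcl' (x : ZFSet) : (tcl' x).rank = x.rank := by
  induction x using ZFSet.inductionOn with
  | _ x IH =>
    apply le_antisymm
    · rw [ZFSet.rank_le_iff]
      intro y hy
      rcases mem_tcl'.1 hy with h | ⟨w, hw, h⟩
      · exact ZFSet.rank_lt_of_mem h
      · calc y.rank < (tcl' w).rank := ZFSet.rank_lt_of_mem h
          _ = w.rank := IH w hw
          _ < x.rank := ZFSet.rank_lt_of_mem hw
    · exact rank_le_of_subset subset_tcl'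

/-! #### vN ordinal of the same rank -/

open ZFSet in
noncomputable def ordOf : ZFSet → ZFSet :=
  zrec fun x rec => ⋃₀ zimage (fun y => insert (rec y) (rec y)) x

theorem mem_ordOf {x z : ZFSet} : z ∈ ordOf x ↔ ∃ y ∈ x, z ∈ insert (ordOf y) (ordOf y) := by
  rw [ordOf, zrec_eq]
  simp only [ZFSet.mem_sUnion, mem_zimage]
  constructor
  · rintro ⟨w, ⟨y, hy, rfl⟩, hw⟩
    rw [dif_pos hy] at hw; exact ⟨y, hy, hw⟩
  · rintro ⟨y, hy, hw⟩
    exact ⟨_, ⟨y, hy, rfl⟩, by rwa [dif_pos hy]⟩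

theorem isOrd_ordOf (x : ZFSet) : IsOrd (ordOf x) := by
  induction x using ZFSet.inductionOn with
  | _ x IH =>
    constructor
    · intro y hy
      rcases mem_ordOf.1 hy with ⟨w, hw, h⟩
      rcases ZFSet.mem_insert_iff.1 h with rfl | h
      · intro z hz
        exact mem_ordOf.2 ⟨w, hw, ZFSet.mem_insert_of_mem _ hz⟩
      · intro z hz
        exact mem_ordOf.2 ⟨w, hw, ZFSet.mem_insert_of_mem _ (zsubset_iff.1 ((IH w hw).1 y h) hz)⟩
    · intro y hy
      rcases mem_ordOf.1 hy with ⟨w, hw, h⟩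
      rcases ZFSet.mem_insert_iff.1 h with rfl | h
      · exact (IH w hw).1
      · exact (IH w hw).2 y h

theorem rank_ordOf (x : ZFSet) : (ordOf x).rank = x.rank := by
  induction x using ZFSet.inductionOn with
  | _ x IH =>
    apply le_antisymm
    · rw [ZFSet.rank_le_iff]
      intro y hy
      rcases mem_ordOf.1 hy with ⟨w, hw, h⟩
      have hw' : w.rank < x.rank := ZFSet.rank_lt_of_mem hw
      rcases ZFSet.mem_insert_iff.1 h with rfl | h
      · rwa [IH w hw]
      · calc y.rank < (ordOf w).rank := ZFSet.rank_lt_of_mem h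
          _ = w.rank := IH w hw
          _ < x.rank := hw'
    · rw [ZFSet.rank_le_iff]
      intro y hy
      have h1 : ordOf y ∈ ordOf x := mem_ordOf.2 ⟨y, hy, ZFSet.mem_insert _ _⟩
      calc y.rank = (ordOf y).rank := (IH y hy).symm
        _ < (ordOf x).rank := ZFSet.rank_lt_of_mem h1

/-! #### the cumulative hierarchy as sets -/

open ZFSet in
noncomputable def Vzf : ZFSet → ZFSet :=
  zrec fun x rec => ⋃₀ zimage (fun y => ZFSet.powerset (rec y)) x

theorem mem_Vzf' {a z : ZFSet} : z ∈ Vzf a ↔ ∃ b ∈ a, z ⊆ Vzf b := by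
  rw [Vzf, zrec_eq]
  simp only [ZFSet.mem_sUnion, mem_zimage]
  constructor
  · rintro ⟨w, ⟨y, hy, rfl⟩, hw⟩
    rw [dif_pos hy] at hw; exact ⟨y, hy, ZFSet.mem_powerset.1 hw⟩
  · rintro ⟨y, hy, hw⟩
    exact ⟨_, ⟨y, hy, rfl⟩, by rw [dif_pos hy]; exact ZFSet.mem_powerset.2 hw⟩

theorem mem_Vzf {a z : ZFSet} : z ∈ Vzf a ↔ z.rank < a.rank := by
  induction a using ZFSet.inductionOn generalizing z with
  | _ a IH =>
    rw [mem_Vzf']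
    constructor
    · rintro ⟨b, hb, hzb⟩
      have : z.rank ≤ (Vzf b).rank := rank_le_of_subset hzb
      have h2 : (Vzf b).rank ≤ b.rank := by
        rw [ZFSet.rank_le_iff]; intro y hy; exact (IH b hb).1 hy
      exact lt_of_le_of_lt (this.trans h2) (ZFSet.rank_lt_of_mem hb)
    · intro hz
      have := ZFSet.lt_rank_iff.1 hz
      rcases this with ⟨b, hb, hzb⟩
      refine ⟨b, hb, zsubset_iff.2 fun y hy => (IH b hb).2 ?_⟩
      exact lt_of_lt_of_le (ZFSet.rank_lt_of_mem hy) hzb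

theorem rank_Vzf (a : ZFSet) : (Vzf a).rank = a.rank := by
  apply le_antisymm
  · rw [ZFSet.rank_le_iff]; intro y hy; exact mem_Vzf.1 hy
  · rw [ZFSet.rank_le_iff]; intro y hy
    calc y.rank = (ordOf y).rank := (rank_ordOf y).symm
      _ < (Vzf a).rank := ZFSet.rank_lt_of_mem (mem_Vzf.2 (by rw [rank_ordOf]; exact ZFSet.rank_lt_of_mem hy))

theorem toSet_Vzf (a : ZFSet) : (Vzf a).toSet = VSet a := by
  ext z; simp only [zmem_toSet, mem_Vzf]; rfl

theorem mem_VSet {a z : ZFSet} : z ∈ VSet a ↔ z.rank < a.rank := Iff.rfl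

/-! #### vN ordinals -/

theorem IsOrd.transitive {a : ZFSet} (h : IsOrd a) : a.IsTransitive := h.1

theorem IsOrd.mem {a b : ZFSet} (ha : IsOrd a) (hb : b ∈ a) : IsOrd b :=
  ⟨ha.2 b hb, fun c hc => ha.2 c (zsubset_iff.1 (ha.1 b hb) hc)⟩

theorem isOrd_trichot : ∀ a : ZFSet, IsOrd a → ∀ b : ZFSet, IsOrd b →
    a ∈ b ∨ a = b ∨ b ∈ a := by
  intro a
  induction a using ZFSet.inductionOn with
  | _ a IHa =>
    intro ha b
    induction b using ZFSet.inductionOn with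
    | _ b IHb =>
      intro hb
      by_cases hab : a ∈ b
      · exact Or.inl hab
      by_cases hba : b ∈ a
      · exact Or.inr (Or.inr hba)
      refine Or.inr (Or.inl (ZFSet.ext fun x => ⟨fun hx => ?_, fun hx => ?_⟩))
      · rcases IHa x hx (ha.mem hx) b hb with h | rfl | h
        · exact h
        · exact absurd hx hba
        · exact absurd (ha.1.mem_trans h hx) hba
      · rcases IHb x hx (hb.mem hx) with h | rfl | h
        · exact absurd (hb.1.mem_trans h hx) hab
        · exact absurd hx hab
        · exact h

theorem IsOrd.mem_of_rank_lt {a b : ZFSet} (ha : IsOrd a) (hb : IsOrd b)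
    (h : a.rank < b.rank) : a ∈ b := by
  rcases isOrd_trichot a ha b hb with h' | rfl | h'
  · exact h'
  · exact absurd h (lt_irrefl _)
  · exact absurd (ZFSet.rank_lt_of_mem h') (not_lt.2 h.le)

theorem isOrd_empty : IsOrd ∅ :=
  ⟨ZFSet.isTransitive_empty, fun y hy => absurd hy (ZFSet.notMem_empty y)⟩

theorem IsOrd.insert_self {a : ZFSet} (ha : IsOrd a) : IsOrd (insert a a) := by
  constructor
  · intro y hy
    rcases ZFSet.mem_insert_iff.1 hy with rfl | hy
    · exact zsubset_iff.2 fun z hz => ZFSet.mem_insert_of_mem _ hz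
    · exact zsubset_iff.2 fun z hz => ZFSet.mem_insert_of_mem _ (zsubset_iff.1 (ha.1 y hy) hz)
  · intro y hy
    rcases ZFSet.mem_insert_iff.1 hy with rfl | hy
    · exact ha.1
    · exact ha.2 y hy
/-! ### The Mostowski collapse -/

noncomputable def clps (M : Set ZFSet) : ZFSet → ZFSet :=
  zrec fun x rec => zimage rec (ZFSet.sep (fun y => y ∈ M) x)

theorem mem_clps {M : Set ZFSet} {x z : ZFSet} :
    z ∈ clps M x ↔ ∃ y, y ∈ x ∧ y ∈ M ∧ clps M y = z := by
  conv_lhs => rw [clps, zrec_eq]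
  simp only [mem_zimage, ZFSet.mem_sep, id]
  constructor
  · rintro ⟨y, ⟨hyx, hyM⟩, hy⟩
    rw [dif_pos hyx] at hy
    exact ⟨y, hyx, hyM, hy⟩
  · rintro ⟨y, hyx, hyM, hy⟩
    exact ⟨y, ⟨hyx, hyM⟩, by rw [dif_pos hyx]; exact hy⟩

theorem clps_mem {M : Set ZFSet} {x y : ZFSet} (hy : y ∈ x) (hyM : y ∈ M) :
    clps M y ∈ clps M x :=
  mem_clps.2 ⟨y, hy, hyM, rfl⟩

theorem clps_transitive {M : Set ZFSet} {x : ZFSet} (hx : x.IsTransitive) :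
    (clps M x).IsTransitive := by
  intro y hy
  rcases (mem_clps (M := M)).1 hy with ⟨z, hzx, hzM, hz⟩
  subst hz
  refine zsubset_iff.2 fun w hw => ?_
  rcases (mem_clps (M := M)).1 hw with ⟨c, hcz, hcM, hc⟩
  subst hc
  exact clps_mem (hx.mem_trans hcz hzx) hcM

/-! ### Elementarity helpers -/

section Elem

variable {lam : ZFSet} {M : Set ZFSet}

theorem rank_lt_of_memM (hM : Prec M (VSet lam)) {x : ZFSet} (hx : x ∈ M) :
    x.rank < lam.rank := hM.1 hx

theorem memV_of_memM (hM : Prec M (VSet lam)) {x : ZFSet} (hx : x ∈ M) :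
    x ∈ VSet lam := hM.1 hx

theorem memV_of_mem {x y : ZFSet} (hy : y ∈ VSet lam) (hx : x ∈ y) : x ∈ VSet lam :=
  lt_trans (ZFSet.rank_lt_of_mem hx) hy

theorem prec_ex (hM : Prec M (VSet lam)) {n} (φ : SF (n + 1)) (v : Fin n → ZFSet)
    (hv : ∀ i, v i ∈ M) (hR : Realize (VSet lam) (.ex φ) v) :
    ∃ w ∈ M, Realize (VSet lam) φ (Fin.cons w v) := by
  have h1 := (hM.2 (.ex φ) v hv).2 hR
  rcases h1 with ⟨w, hw, hsat⟩
  refine ⟨w, hw, ?_⟩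
  refine (hM.2 φ (Fin.cons w v) ?_).1 hsat
  intro i
  refine Fin.cases ?_ (fun j => ?_) i
  · simpa using hw
  · simpa using hv j

/-- The veracity on `M` of extensionality. -/
theorem M_ext (hM : Prec M (VSet lam)) {x y : ZFSet} (hx : x ∈ M) (hy : y ∈ M)
    (h : ∀ z ∈ M, z ∈ x ↔ z ∈ y) : x = y := by
  by_contra hne
  have hex : ∃ u : ZFSet, ¬ (u ∈ x ↔ u ∈ y) := by
    by_contra h'
    push_neg at h'
    exact hne (ZFSet.ext fun z => h' z)
  rcases hex with ⟨u, hu⟩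
  have huV : u ∈ VSet lam := by
    rcases Classical.em (u ∈ x) with h1 | h1
    · exact memV_of_mem (memV_of_memM hM hx) h1
    · have h2 : u ∈ y := by tauto
      exact memV_of_mem (memV_of_memM hM hy) h2
  have hsat : Realize (VSet lam) (SF.ex (SF.not (SF.iff (.mem 0 (0 : Fin 2).succ)
      (.mem 0 ((0 : Fin 1).succ.succ))))) (Fin.cons x (Fin.cons y Fin.elim0)) := by
    refine ⟨u, huV, ?_⟩
    simp only [realize_not, realize_iff, realize_mem, Fin.cons_succ, Fin.cons_zero]
    exact hu
  rcases prec_ex hM _ _ (fun i => by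
    refine Fin.cases ?_ (fun j => ?_) i
    · simpa using hx
    · simpa using Fin.cases (by simpa using hy) (fun k => k.elim0) j) hsat with ⟨w, hwM, hw⟩
  simp only [realize_not, realize_iff, realize_mem, Fin.cons_succ, Fin.cons_zero] at hw
  exact hw (h w hwM)

/-- `M` is closed under intersections. -/
theorem inter_memM (hM : Prec M (VSet lam)) {x y : ZFSet} (hx : x ∈ M) (hy : y ∈ M) :
    x ∩ y ∈ M := by
  classical
  have hxV := memV_of_memM hM hx
  set φ : SF 2 := SF.ex (SF.all (SF.iff (.mem 0 (0 : Fin 3).succ)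
    (SF.and (.mem 0 ((0 : Fin 2).succ.succ)) (.mem 0 ((0 : Fin 1).succ.succ.succ))))) with hφ
  have hsat : Realize (VSet lam) φ (Fin.cons x (Fin.cons y Fin.elim0)) := by
    refine ⟨x ∩ y, ?_, ?_⟩
    · refine lt_of_le_of_lt (rank_le_of_subset (zsubset_iff.2 fun z hz => ?_)) hxV
      exact (ZFSet.mem_inter.1 hz).1
    · simp only [realize_all, realize_iff, realize_and, realize_mem, Fin.cons_succ,
        Fin.cons_zero]
      intro z _
      exact ZFSet.mem_inter
  rcases prec_ex hM _ _ (fun i => by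
    refine Fin.cases ?_ (fun j => ?_) i
    · simpa using hx
    · simpa using Fin.cases (by simpa using hy) (fun k => k.elim0) j) hsat with ⟨w, hwM, hw⟩
  simp only [realize_all, realize_iff, realize_and, realize_mem, Fin.cons_succ,
    Fin.cons_zero] at hw
  have : w = x ∩ y := by
    apply ZFSet.ext
    intro z
    constructor
    · intro hz
      exact ZFSet.mem_inter.2 (hw z (memV_of_mem (memV_of_memM hM hwM) hz) |>.1 hz)
    · intro hz
      have hzV : z ∈ VSet lam := memV_of_mem hxV (ZFSet.mem_inter.1 hz).1
      exact (hw z hzV).2 (ZFSet.mem_inter.1 hz)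
  rwa [this] at hwM

/-- Nonempty members of `M` have members in `M`. -/
theorem witness_memM (hM : Prec M (VSet lam)) {x : ZFSet} (hx : x ∈ M) (hne : x ≠ ∅) :
    ∃ u ∈ M, u ∈ x := by
  have hex : ∃ u, u ∈ x := by
    by_contra h
    push_neg at h
    exact hne (ZFSet.ext fun z => ⟨fun hz => absurd hz (h z), fun hz =>
      absurd hz (ZFSet.notMem_empty z)⟩)
  rcases hex with ⟨u, hu⟩
  have hsat : Realize (VSet lam) (SF.ex (.mem 0 (0 : Fin 1).succ))
      (Fin.cons x Fin.elim0) := by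
    refine ⟨u, memV_of_mem (memV_of_memM hM hx) hu, ?_⟩
    simpa using hu
  rcases prec_ex hM _ _ (fun i => by
    refine Fin.cases (by simpa using hx) (fun j => j.elim0) i) hsat with ⟨w, hwM, hw⟩
  simp only [realize_mem, Fin.cons_succ, Fin.cons_zero] at hw
  exact ⟨w, hwM, hw⟩

/-- `M` is closed under removing a point. -/
theorem sepne_memM (hM : Prec M (VSet lam)) {Z u : ZFSet} (hZ : Z ∈ M) (hu : u ∈ M) :
    ZFSet.sep (fun z => ¬ z = u) Z ∈ M := by
  set φ : SF 2 := SF.ex (SF.all (SF.iff (.mem 0 (0 : Fin 3).succ)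
    (SF.and (.mem 0 ((0 : Fin 2).succ.succ))
      (SF.not (.eq 0 ((0 : Fin 1).succ.succ.succ)))))) with hφ
  have hZV := memV_of_memM hM hZ
  have hsat : Realize (VSet lam) φ (Fin.cons Z (Fin.cons u Fin.elim0)) := by
    refine ⟨ZFSet.sep (fun z => ¬ z = u) Z, lt_of_le_of_lt (rank_le_of_subset (sep_subset' _ _)) hZV, ?_⟩
    simp only [realize_all, realize_iff, realize_and, realize_not, realize_mem, realize_eq,
      Fin.cons_succ, Fin.cons_zero]
    intro z _
    exact ZFSet.mem_sep
  rcases prec_ex hM _ _ (fun i => by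
    refine Fin.cases ?_ (fun j => ?_) i
    · simpa using hZ
    · simpa using Fin.cases (by simpa using hu) (fun k => k.elim0) j) hsat with ⟨w, hwM, hw⟩
  simp only [realize_all, realize_iff, realize_and, realize_not, realize_mem, realize_eq,
    Fin.cons_succ, Fin.cons_zero] at hw
  have : w = ZFSet.sep (fun z => ¬ z = u) Z := by
    apply ZFSet.ext
    intro z
    constructor
    · intro hz
      exact ZFSet.mem_sep.2 ((hw z (memV_of_mem (memV_of_memM hM hwM) hz)).1 hz)
    · intro hz
      have h1 := ZFSet.mem_sep.1 hz
      exact (hw z (memV_of_mem hZV h1.1)).2 h1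
  rwa [this] at hwM

/-- `M` is closed under insertion (within rank bounds). -/
theorem insert_memM (hM : Prec M (VSet lam)) {W u : ZFSet} (hW : W ∈ M) (hu : u ∈ M)
    (hrank : (insert u W).rank < lam.rank) : insert u W ∈ M := by
  set φ : SF 2 := SF.ex (SF.all (SF.iff (.mem 0 (0 : Fin 3).succ)
    (SF.or (.eq 0 ((0 : Fin 1).succ.succ.succ)) (.mem 0 ((0 : Fin 2).succ.succ))))) with hφ
  have hsat : Realize (VSet lam) φ (Fin.cons W (Fin.cons u Fin.elim0)) := by
    refine ⟨insert u W, hrank, ?_⟩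
    simp only [realize_all, realize_iff, realize_or, realize_mem, realize_eq,
      Fin.cons_succ, Fin.cons_zero]
    intro z _
    exact ZFSet.mem_insert_iff
  rcases prec_ex hM _ _ (fun i => by
    refine Fin.cases ?_ (fun j => ?_) i
    · simpa using hW
    · simpa using Fin.cases (by simpa using hu) (fun k => k.elim0) j) hsat with ⟨w, hwM, hw⟩
  simp only [realize_all, realize_iff, realize_or, realize_mem, realize_eq,
    Fin.cons_succ, Fin.cons_zero] at hw
  have : w = insert u W := by
    apply ZFSet.ext
    intro z
    constructor
    · intro hz
      exact ZFSet.mem_insert_iff.2 ((hw z (memV_of_mem (memV_of_memM hM hwM) hz)).1 hz)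
    · intro hz
      rcases ZFSet.mem_insert_iff.1 hz with rfl | hz'
      · exact (hw z (memV_of_memM hM hu)).2 (Or.inl rfl)
      · exact (hw z (memV_of_mem (memV_of_memM hM hW) hz')).2 (Or.inr hz')
  rwa [this] at hwM

/-- All subsets of finite members of `M` belong to `M`. -/
theorem subsets_memM (hM : Prec M (VSet lam)) :
    ∀ (n : ℕ) (Z : ZFSet), Z ∈ M → Z.toSet.Finite → Z.toSet.ncard = n →
      ∀ W, W ⊆ Z → W ∈ M := by
  intro n
  induction n with
  | zero =>
    intro Z hZ hfin hcard W hW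
    have hZe : Z = ∅ := by
      apply ZFSet.ext
      intro z
      constructor
      · intro hz
        have hzz : z ∈ Z.toSet := hz
        rw [(Set.ncard_eq_zero hfin).1 hcard] at hzz
        exact hzz.elim
      · intro hz
        exact (ZFSet.notMem_empty z hz).elim
    have hWZ : W = Z := by
      subst hZe
      apply ZFSet.ext
      intro z
      constructor
      · intro hz
        exact (ZFSet.notMem_empty z (zsubset_iff.1 hW hz)).elim
      · intro hz
        exact (ZFSet.notMem_empty z hz).elim
    rwa [hWZ]
  | succ n IH =>
    intro Z hZ hfin hcard W hW
    have hZne : Z ≠ ∅ := by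
      intro h
      subst h
      rw [show (∅ : ZFSet).toSet = (∅ : Set ZFSet) from Set.ext fun z =>
        ⟨fun hz => absurd hz (ZFSet.notMem_empty z), fun hz => hz.elim⟩] at hcard
      simp at hcard
    rcases witness_memM hM hZ hZne with ⟨u, huM, huZ⟩
    set Z' := ZFSet.sep (fun z => ¬ z = u) Z with hZ'
    have hZ'M : Z' ∈ M := sepne_memM hM hZ huM
    have hZ'set : Z'.toSet = Z.toSet \ {u} := by
      ext z
      simp only [zmem_toSet, Set.mem_diff, Set.mem_singleton_iff, hZ', ZFSet.mem_sep]
    have hZ'fin : Z'.toSet.Finite := by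
      rw [hZ'set]; exact hfin.subset Set.diff_subset
    have hZ'card : Z'.toSet.ncard = n := by
      rw [hZ'set, Set.ncard_diff_singleton_of_mem (show u ∈ Z.toSet from huZ), hcard]
      omega
    set W' := ZFSet.sep (fun z => ¬ z = u) W with hW'
    have hW'Z' : W' ⊆ Z' := by
      refine zsubset_iff.2 fun z hz => ?_
      rcases ZFSet.mem_sep.1 hz with ⟨h1, h2⟩
      exact ZFSet.mem_sep.2 ⟨zsubset_iff.1 hW h1, h2⟩
    have hW'M : W' ∈ M := IH Z' hZ'M hZ'fin hZ'card W' hW'Z'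
    by_cases huW : u ∈ W
    · have heq : W = insert u W' := by
        apply ZFSet.ext
        intro z
        rw [ZFSet.mem_insert_iff, hW', ZFSet.mem_sep]
        constructor
        · intro hz
          rcases Classical.em (z = u) with rfl | hne
          · exact Or.inl rfl
          · exact Or.inr ⟨hz, hne⟩
        · rintro (rfl | ⟨hz, _⟩)
          · exact huW
          · exact hz
      rw [heq]
      refine insert_memM hM hW'M huM ?_
      rw [ZFSet.rank_insert]
      have h1 : u.rank < Z.rank := ZFSet.rank_lt_of_mem huZ
      have h2 : Z.rank < lam.rank := rank_lt_of_memM hM hZ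
      refine max_lt (lt_of_le_of_lt (Order.succ_le_of_lt h1) h2) ?_
      exact lt_of_le_of_lt (rank_le_of_subset (hW'Z'.trans (sep_subset' _ _) : W' ⊆ Z)) h2
    · have heq : W = W' := by
        apply ZFSet.ext
        intro z
        rw [hW', ZFSet.mem_sep]
        constructor
        · intro hz
          refine ⟨hz, fun h => ?_⟩
          subst h
          exact huW hz
        · exact fun h => h.1
      rwa [heq]

/-- Every subset of `X` is `ℵ₀`-approximated. -/
theorem approx_free (hM : Prec M (VSet lam)) (d : ZFSet) : Approx M ℵ₀ d := by
  intro Z hZ hcard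
  have hfin : Z.toSet.Finite := Cardinal.lt_aleph0_iff_set_finite.1 hcard
  refine subsets_memM hM Z.toSet.ncard Z hZ hfin rfl _ ?_
  refine zsubset_iff.2 fun z hz => ?_
  exact (ZFSet.mem_inter.1 hz).2

end Elem
/-! ### First-order rank certificates -/

section Certificates

variable {lam : ZFSet}

theorem mem_zpair {x y z : ZFSet} : z ∈ ZFSet.pair x y ↔ z = {x} ∨ z = {x, y} :=
  ZFSet.mem_pair

theorem hsucc_rank_zpair {Λ : Ordinal} (hsucc : ∀ o : Ordinal, o < Λ → Order.succ o < Λ)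
    {x y : ZFSet} (hx : x.rank < Λ) (hy : y.rank < Λ) : (ZFSet.pair x y).rank < Λ := by
  have h1 : ({x} : ZFSet).rank < Λ := by
    rw [ZFSet.rank_singleton]; exact hsucc _ hx
  have h2 : ({x, y} : ZFSet).rank < Λ := by
    rw [ZFSet.rank_pair]; exact max_lt (hsucc _ hx) (hsucc _ hy)
  show (({{x}, {x, y}} : ZFSet)).rank < Λ
  rw [ZFSet.rank_pair]
  exact max_lt (hsucc _ h1) (hsucc _ h2)

theorem rank_lt_of_mem_trans {Λ : Ordinal} {x y : ZFSet} (hy : y.rank < Λ) (hx : x ∈ y) :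
    x.rank < Λ := lt_trans (ZFSet.rank_lt_of_mem hx) hy

theorem memV_pair_left {u r f : ZFSet} (hf : f ∈ VSet lam) (h : ZFSet.pair u r ∈ f) :
    u ∈ VSet lam := by
  have h1 : ({u, r} : ZFSet) ∈ ZFSet.pair u r := mem_zpair.2 (Or.inr rfl)
  have h2 : u ∈ ({u, r} : ZFSet) := ZFSet.mem_pair.2 (Or.inl rfl)
  exact rank_lt_of_mem_trans (rank_lt_of_mem_trans (rank_lt_of_mem_trans hf h) h1) h2

theorem memV_pair_right {u r f : ZFSet} (hf : f ∈ VSet lam) (h : ZFSet.pair u r ∈ f) :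
    r ∈ VSet lam := by
  have h1 : ({u, r} : ZFSet) ∈ ZFSet.pair u r := mem_zpair.2 (Or.inr rfl)
  have h2 : r ∈ ({u, r} : ZFSet) := ZFSet.mem_pair.2 (Or.inr rfl)
  exact rank_lt_of_mem_trans (rank_lt_of_mem_trans (rank_lt_of_mem_trans hf h) h1) h2

/-- transitivity of variable `t`, as a formula -/
def transF {n} (t : Fin n) : SF n := SF.ball t (SF.ball 0 (.mem 0 t.succ.succ))

theorem transF_realize {n} (t : Fin n) (v : Fin n → ZFSet) (hvt : v t ∈ VSet lam) :
    Realize (VSet lam) (transF t) v ↔ (v t).IsTransitive := by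
  simp only [transF, realize_ball, realize_mem, Fin.cons_succ, Fin.cons_zero]
  constructor
  · intro h y hy
    refine zsubset_iff.2 fun z hz => ?_
    exact h y (memV_of_mem hvt hy) hy z (memV_of_mem (memV_of_mem hvt hy) hz) hz
  · intro h y _ hy z _ hz
    exact h.mem_trans hz hy

/-- `v p = ⟨v u, v r⟩` (Kuratowski pair), as a formula -/
def pairEqF {n} (p u r : Fin n) : SF n :=
  SF.all (SF.iff (.mem 0 p.succ)
    (SF.or (SF.all (SF.iff (.mem 0 (0 : Fin (n + 1)).succ) (.eq 0 u.succ.succ)))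
      (SF.all (SF.iff (.mem 0 (0 : Fin (n + 1)).succ)
        (SF.or (.eq 0 u.succ.succ) (.eq 0 r.succ.succ))))))

theorem pairEq_realize {n} (hsucc : ∀ o : Ordinal, o < lam.rank → Order.succ o < lam.rank)
    (p u r : Fin n) (v : Fin n → ZFSet) (hp : v p ∈ VSet lam)
    (hu : v u ∈ VSet lam) (hr : v r ∈ VSet lam) :
    Realize (VSet lam) (pairEqF p u r) v ↔ v p = ZFSet.pair (v u) (v r) := by
  have hsing : ∀ q : ZFSet, q ∈ VSet lam →
      ((∀ s, s ∈ VSet lam → (s ∈ q ↔ s = v u)) ↔ q = ({v u} : ZFSet)) := by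
    intro q hq
    constructor
    · intro h
      apply ZFSet.ext
      intro s
      rw [ZFSet.mem_singleton]
      constructor
      · intro hs
        exact (h s (memV_of_mem hq hs)).1 hs
      · rintro rfl
        exact (h _ hu).2 rfl
    · rintro rfl
      intro s _
      exact ZFSet.mem_singleton
  have hdoub : ∀ q : ZFSet, q ∈ VSet lam →
      ((∀ s, s ∈ VSet lam → (s ∈ q ↔ (s = v u ∨ s = v r))) ↔ q = ({v u, v r} : ZFSet)) := by
    intro q hq
    constructor
    · intro h
      apply ZFSet.ext
      intro s
      rw [ZFSet.mem_pair]
      constructor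
      · intro hs
        exact (h s (memV_of_mem hq hs)).1 hs
      · rintro (rfl | rfl)
        · exact (h _ hu).2 (Or.inl rfl)
        · exact (h _ hr).2 (Or.inr rfl)
    · rintro rfl
      intro s _
      exact ZFSet.mem_pair
  simp only [pairEqF, realize_all, realize_iff, realize_or, realize_mem, realize_eq,
    Fin.cons_succ, Fin.cons_zero]
  constructor
  · intro h
    apply ZFSet.ext
    intro q
    rw [mem_zpair]
    constructor
    · intro hq
      have hqV : q ∈ VSet lam := memV_of_mem hp hq
      rcases (h q hqV).1 hq with h' | h'
      · exact Or.inl ((hsing q hqV).1 h')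
      · exact Or.inr ((hdoub q hqV).1 h')
    · rintro (rfl | rfl)
      · have hqV : ({v u} : ZFSet) ∈ VSet lam := by
          show ({v u} : ZFSet).rank < lam.rank
          rw [ZFSet.rank_singleton]
          exact hsucc _ hu
        exact (h _ hqV).2 (Or.inl ((hsing _ hqV).2 rfl))
      · have hqV : ({v u, v r} : ZFSet) ∈ VSet lam := by
          show ({v u, v r} : ZFSet).rank < lam.rank
          rw [ZFSet.rank_pair]
          exact max_lt (hsucc _ hu) (hsucc _ hr)
        exact (h _ hqV).2 (Or.inr ((hdoub _ hqV).2 rfl))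
  · intro h q hqV
    rw [h, mem_zpair]
    constructor
    · rintro (rfl | rfl)
      · exact Or.inl ((hsing _ hqV).2 rfl)
      · exact Or.inr ((hdoub _ hqV).2 rfl)
    · rintro (h' | h')
      · exact Or.inl ((hsing q hqV).1 h')
      · exact Or.inr ((hdoub q hqV).1 h')

/-- `⟨v u, v r⟩ ∈ v f`, as a formula -/
def memPairF {n} (u r f : Fin n) : SF n := SF.bex f (pairEqF 0 u.succ r.succ)

theorem memPair_realize {n} (hsucc : ∀ o : Ordinal, o < lam.rank → Order.succ o < lam.rank)
    (u r f : Fin n) (v : Fin n → ZFSet) (hu : v u ∈ VSet lam)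
    (hr : v r ∈ VSet lam) (hf : v f ∈ VSet lam) :
    Realize (VSet lam) (memPairF u r f) v ↔ ZFSet.pair (v u) (v r) ∈ v f := by
  simp only [memPairF, realize_bex, Fin.cons_succ, Fin.cons_zero]
  constructor
  · rintro ⟨p, hpV, hpf, hsat⟩
    rw [pairEq_realize hsucc 0 u.succ r.succ (Fin.cons p v) (by simpa using hpV)
      (by simpa using hu) (by simpa using hr)] at hsat
    simp only [Fin.cons_succ, Fin.cons_zero] at hsat
    rwa [hsat] at hpf
  · intro h
    refine ⟨ZFSet.pair (v u) (v r), hsucc_rank_zpair hsucc hu hr, h, ?_⟩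
    rw [pairEq_realize hsucc 0 u.succ r.succ _ (by simpa using (show ZFSet.pair (v u) (v r) ∈ VSet lam from hsucc_rank_zpair hsucc hu hr))
      (by simpa using hu) (by simpa using hr)]
    simp

/-- `v a` is a von Neumann ordinal, as a formula -/
def ordF {n} (a : Fin n) : SF n := (transF a).and (SF.ball a (transF 0))

theorem ordF_realize {n} (a : Fin n) (v : Fin n → ZFSet) (ha : v a ∈ VSet lam) :
    Realize (VSet lam) (ordF a) v ↔ IsOrd (v a) := by
  simp only [ordF, realize_and, realize_ball]
  constructor
  · rintro ⟨h1, h2⟩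
    refine ⟨(transF_realize a v ha).1 h1, fun y hy => ?_⟩
    have hyV : y ∈ VSet lam := memV_of_mem ha hy
    have := h2 y hyV hy
    rwa [transF_realize 0 (Fin.cons y v) (by simpa using hyV)] at this
  · rintro ⟨h1, h2⟩
    refine ⟨(transF_realize a v ha).2 h1, fun y hyV hy => ?_⟩
    rw [transF_realize 0 (Fin.cons y v) (by simpa using hyV)]
    exact h2 y hy

end Certificates
section Certificates2

variable {lam : ZFSet}

/-- totality of `f` on `t` -/
def totF {n} (t f : Fin n) : SF n :=
  SF.ball t (SF.ex (memPairF (0 : Fin (n + 1)).succ 0 f.succ.succ))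

/-- `∈`-monotonicity of `f` on `t` -/
def monoF {n} (t f : Fin n) : SF n :=
  SF.ball t (SF.all ((memPairF (0 : Fin (n + 1)).succ 0 f.succ.succ).imp
    (SF.ball (0 : Fin (n + 1)).succ
      (SF.all ((memPairF (0 : Fin (n + 3)).succ 0 f.succ.succ.succ.succ).imp
        (.mem 0 ((0 : Fin (n + 2)).succ.succ)))))))

/-- tightness of `f` on `t` -/
def tightF {n} (t f : Fin n) : SF n :=
  SF.ball t (SF.all ((memPairF (0 : Fin (n + 1)).succ 0 f.succ.succ).imp
    (SF.ball 0 (SF.bex ((0 : Fin (n + 1)).succ.succ) (SF.ex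
      ((memPairF (0 : Fin (n + 4)).succ 0 f.succ.succ.succ.succ.succ).and
        (SF.or (.mem ((0 : Fin (n + 3)).succ.succ) 0)
          (.eq ((0 : Fin (n + 3)).succ.succ) 0))))))))

/-- `f` is the rank function (with ordinal values) on the transitive set `t` -/
def rankFnF {n} (t f : Fin n) : SF n :=
  (transF t).and ((totF t f).and ((monoF t f).and (tightF t f)))

theorem totF_realize (hsucc : ∀ o : Ordinal, o < lam.rank → Order.succ o < lam.rank) {n} (t f : Fin n) (v : Fin n → ZFSet)
    (ht : v t ∈ VSet lam) (hf : v f ∈ VSet lam) :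
    Realize (VSet lam) (totF t f) v ↔ ∀ u ∈ v t, ∃ r, ZFSet.pair u r ∈ v f := by
  simp only [totF, realize_ball, realize_ex, Fin.cons_succ, Fin.cons_zero]
  constructor
  · intro h u hu
    rcases h u (memV_of_mem ht hu) hu with ⟨r, hrV, hsat⟩
    rw [memPair_realize hsucc _ _ _ _ (by simpa using memV_of_mem ht hu) (by simpa using hrV)
      (by simpa using hf)] at hsat
    simp only [Fin.cons_succ, Fin.cons_zero] at hsat
    exact ⟨r, hsat⟩
  · intro h u huV hu
    rcases h u hu with ⟨r, hr⟩
    have hrV : r ∈ VSet lam := memV_pair_right hf hr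
    refine ⟨r, hrV, ?_⟩
    rw [memPair_realize hsucc _ _ _ _ (by simpa using huV) (by simpa using hrV)
      (by simpa using hf)]
    simpa using hr

theorem monoF_realize (hsucc : ∀ o : Ordinal, o < lam.rank → Order.succ o < lam.rank) {n} (t f : Fin n) (v : Fin n → ZFSet)
    (ht : v t ∈ VSet lam) (hf : v f ∈ VSet lam) :
    Realize (VSet lam) (monoF t f) v ↔
      ∀ u ∈ v t, ∀ r, ZFSet.pair u r ∈ v f →
        ∀ u' ∈ u, ∀ r', ZFSet.pair u' r' ∈ v f → r' ∈ r := by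
  simp only [monoF, realize_ball, realize_all, realize_imp, realize_mem,
    Fin.cons_succ, Fin.cons_zero]
  constructor
  · intro h u hu r hr u' hu' r' hr'
    have huV : u ∈ VSet lam := memV_of_mem ht hu
    have hrV : r ∈ VSet lam := memV_pair_right hf hr
    have hu'V : u' ∈ VSet lam := memV_of_mem huV hu'
    have hr'V : r' ∈ VSet lam := memV_pair_right hf hr'
    have h1 := h u huV hu r hrV
    rw [memPair_realize hsucc _ _ _ _ (by simpa using huV) (by simpa using hrV)
      (by simpa using hf)] at h1
    simp only [Fin.cons_succ, Fin.cons_zero] at h1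
    have h2 := h1 hr u' hu'V hu' r' hr'V
    rw [memPair_realize hsucc _ _ _ _ (by simpa using hu'V) (by simpa using hr'V)
      (by simpa using hf)] at h2
    simp only [Fin.cons_succ, Fin.cons_zero] at h2
    exact h2 hr'
  · intro h u huV hu r hrV hsat u' hu'V hu' r' hr'V hsat'
    rw [memPair_realize hsucc _ _ _ _ (by simpa using huV) (by simpa using hrV)
      (by simpa using hf)] at hsat
    simp only [Fin.cons_succ, Fin.cons_zero] at hsat
    rw [memPair_realize hsucc _ _ _ _ (by simpa using hu'V) (by simpa using hr'V)
      (by simpa using hf)] at hsat'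
    simp only [Fin.cons_succ, Fin.cons_zero] at hsat'
    exact h u hu r hsat u' hu' r' hsat'

theorem tightF_realize (hsucc : ∀ o : Ordinal, o < lam.rank → Order.succ o < lam.rank) {n} (t f : Fin n) (v : Fin n → ZFSet)
    (ht : v t ∈ VSet lam) (hf : v f ∈ VSet lam) :
    Realize (VSet lam) (tightF t f) v ↔
      ∀ u ∈ v t, ∀ r, ZFSet.pair u r ∈ v f →
        ∀ b ∈ r, ∃ u' ∈ u, ∃ r', ZFSet.pair u' r' ∈ v f ∧ (b ∈ r' ∨ b = r') := by
  simp only [tightF, realize_ball, realize_all, realize_imp, realize_bex, realize_ex,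
    realize_and, realize_or, realize_mem, realize_eq, Fin.cons_succ, Fin.cons_zero]
  constructor
  · intro h u hu r hr b hb
    have huV : u ∈ VSet lam := memV_of_mem ht hu
    have hrV : r ∈ VSet lam := memV_pair_right hf hr
    have hbV : b ∈ VSet lam := memV_of_mem hrV hb
    have h1 := h u huV hu r hrV
    rw [memPair_realize hsucc _ _ _ _ (by simpa using huV) (by simpa using hrV)
      (by simpa using hf)] at h1
    simp only [Fin.cons_succ, Fin.cons_zero] at h1
    rcases h1 hr b hbV hb with ⟨u', hu'V, hu', r', hr'V, hsat, hor⟩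
    rw [memPair_realize hsucc _ _ _ _ (by simpa using hu'V) (by simpa using hr'V)
      (by simpa using hf)] at hsat
    simp only [Fin.cons_succ, Fin.cons_zero] at hsat
    exact ⟨u', hu', r', hsat, hor⟩
  · intro h u huV hu r hrV hsat b hbV hb
    rw [memPair_realize hsucc _ _ _ _ (by simpa using huV) (by simpa using hrV)
      (by simpa using hf)] at hsat
    simp only [Fin.cons_succ, Fin.cons_zero] at hsat
    rcases h u hu r hsat b hb with ⟨u', hu', r', hr', hor⟩
    have hu'V : u' ∈ VSet lam := memV_of_mem huV hu'
    have hr'V : r' ∈ VSet lam := memV_pair_right hf hr'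
    refine ⟨u', hu'V, hu', r', hr'V, ?_, hor⟩
    rw [memPair_realize hsucc _ _ _ _ (by simpa using hu'V) (by simpa using hr'V)
      (by simpa using hf)]
    simpa using hr'

theorem rankFn_realize (hsucc : ∀ o : Ordinal, o < lam.rank → Order.succ o < lam.rank) {n} (t f : Fin n) (v : Fin n → ZFSet)
    (ht : v t ∈ VSet lam) (hf : v f ∈ VSet lam) :
    Realize (VSet lam) (rankFnF t f) v ↔
      ((v t).IsTransitive ∧
       (∀ u ∈ v t, ∃ r, ZFSet.pair u r ∈ v f) ∧
       (∀ u ∈ v t, ∀ r, ZFSet.pair u r ∈ v f →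
          ∀ u' ∈ u, ∀ r', ZFSet.pair u' r' ∈ v f → r' ∈ r) ∧
       (∀ u ∈ v t, ∀ r, ZFSet.pair u r ∈ v f →
          ∀ b ∈ r, ∃ u' ∈ u, ∃ r', ZFSet.pair u' r' ∈ v f ∧ (b ∈ r' ∨ b = r'))) := by
  simp only [rankFnF, realize_and]
  rw [transF_realize t v ht, totF_realize hsucc t f v ht hf, monoF_realize hsucc t f v ht hf,
    tightF_realize hsucc t f v ht hf]

/-- soundness: a certified rank function computes rank -/
theorem rankFn_sound {t f : ZFSet} (htr : t.IsTransitive)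
    (hmono : ∀ u ∈ t, ∀ r, ZFSet.pair u r ∈ f →
      ∀ u' ∈ u, ∀ r', ZFSet.pair u' r' ∈ f → r' ∈ r)
    (htot : ∀ u ∈ t, ∃ r, ZFSet.pair u r ∈ f)
    (htight : ∀ u ∈ t, ∀ r, ZFSet.pair u r ∈ f →
      ∀ b ∈ r, ∃ u' ∈ u, ∃ r', ZFSet.pair u' r' ∈ f ∧ (b ∈ r' ∨ b = r')) :
    ∀ u, u ∈ t → ∀ r, ZFSet.pair u r ∈ f → r.rank = u.rank := by
  intro u
  induction u using ZFSet.inductionOn with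
  | _ u IH =>
    intro hu r hr
    apply le_antisymm
    · rw [ZFSet.rank_le_iff]
      intro b hb
      rcases htight u hu r hr b hb with ⟨u', hu', r', hr', hor⟩
      have hu't : u' ∈ t := htr.mem_trans hu' hu
      have h1 : r'.rank = u'.rank := IH u' hu' hu't r' hr'
      have h2 : b.rank ≤ r'.rank := by
        rcases hor with h | h
        · exact (ZFSet.rank_lt_of_mem h).le
        · exact h ▸ le_rfl
      calc b.rank ≤ u'.rank := h1 ▸ h2
        _ < u.rank := ZFSet.rank_lt_of_mem hu'
    · rw [ZFSet.rank_le_iff]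
      intro u' hu'
      have hu't : u' ∈ t := htr.mem_trans hu' hu
      rcases htot u' hu't with ⟨r', hr'⟩
      have h1 : r'.rank = u'.rank := IH u' hu' hu't r' hr'
      have h2 : r' ∈ r := hmono u hu r hr u' hu' r' hr'
      calc u'.rank = r'.rank := h1.symm
        _ < r.rank := ZFSet.rank_lt_of_mem h2

/-- completeness data: the canonical rank certificate for `y` -/
theorem rankFn_complete (y : ZFSet) :
    ∃ t g : ZFSet, t.IsTransitive ∧ y ∈ t ∧
      t.rank = Order.succ y.rank ∧ g.rank ≤ Order.succ (Order.succ (Order.succ y.rank)) ∧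
      (∀ u ∈ t, ∀ r, ZFSet.pair u r ∈ g → r = ordOf u) ∧
      (∀ u ∈ t, ZFSet.pair u (ordOf u) ∈ g) := by
  classical
  refine ⟨insert y (tcl' y), zimage (fun u => ZFSet.pair u (ordOf u)) (insert y (tcl' y)),
    ?_, ZFSet.mem_insert y _, ?_, ?_, ?_, ?_⟩
  · intro w hw
    rcases ZFSet.mem_insert_iff.1 hw with rfl | hw'
    · exact (subset_tcl').trans (zsubset_iff.2 fun z hz => ZFSet.mem_insert_of_mem _ hz)
    · exact ((tcl'_transitive y).subset_of_mem hw').trans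
        (zsubset_iff.2 fun z hz => ZFSet.mem_insert_of_mem _ hz)
  · rw [ZFSet.rank_insert, rank_tcl']
    exact max_eq_left (Order.le_succ _)
  · rw [ZFSet.rank_le_iff]
    intro z hz
    rcases mem_zimage.1 hz with ⟨u, hu, rfl⟩
    have hur : u.rank ≤ y.rank := by
      rcases ZFSet.mem_insert_iff.1 hu with rfl | hu'
      · exact le_rfl
      · exact (ZFSet.rank_lt_of_mem hu').le.trans (by rw [rank_tcl'])
    have h1 : (ZFSet.pair u (ordOf u)).rank ≤ Order.succ (Order.succ u.rank) := by
      show (({{u}, {u, ordOf u}} : ZFSet)).rank ≤ _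
      rw [ZFSet.rank_pair, ZFSet.rank_singleton, ZFSet.rank_pair, rank_ordOf]
      simp only [max_self]
      exact le_rfl
    calc (ZFSet.pair u (ordOf u)).rank ≤ Order.succ (Order.succ u.rank) := h1
      _ < Order.succ (Order.succ (Order.succ y.rank)) := by
          exact Order.succ_lt_succ (Order.succ_lt_succ (Order.lt_succ_iff.2 hur))
  · intro u hu r hr
    rcases mem_zimage.1 hr with ⟨u₀, _, heq⟩
    rcases ZFSet.pair_injective heq with ⟨rfl, rfl⟩
    rfl
  · intro u hu
    exact mem_zimage.2 ⟨u, hu, rfl⟩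

end Certificates2
section Psi

variable {lam : ZFSet}

/-- `rank (v y) ≤ rank (v a)`, via a certificate -/
def psiLeF {n} (y a : Fin n) : SF n :=
  SF.ex (SF.ex ((rankFnF (0 : Fin (n + 1)).succ 0).and
    ((SF.mem y.succ.succ (0 : Fin (n + 1)).succ).and
      (SF.ex ((memPairF y.succ.succ.succ 0 (0 : Fin (n + 2)).succ).and
        (SF.or (.mem 0 a.succ.succ.succ) (.eq 0 a.succ.succ.succ)))))))

/-- `rank (v a) ≤ rank (v y)`, via a certificate -/
def psiGeF {n} (y a : Fin n) : SF n :=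
  SF.ex (SF.ex ((rankFnF (0 : Fin (n + 1)).succ 0).and
    ((SF.mem y.succ.succ (0 : Fin (n + 1)).succ).and
      (SF.ex ((memPairF y.succ.succ.succ 0 (0 : Fin (n + 2)).succ).and
        (SF.or (.mem a.succ.succ.succ 0) (.eq a.succ.succ.succ 0)))))))

theorem psiLe_sound (hsucc : ∀ o : Ordinal, o < lam.rank → Order.succ o < lam.rank) {n} (y a : Fin n) (v : Fin n → ZFSet)
    (hy : v y ∈ VSet lam) (ha : v a ∈ VSet lam)
    (h : Realize (VSet lam) (psiLeF y a) v) : (v y).rank ≤ (v a).rank := by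
  simp only [psiLeF, realize_ex, realize_and, realize_mem, realize_or, realize_eq,
    Fin.cons_succ, Fin.cons_zero] at h
  rcases h with ⟨t, htV, g, hgV, hRank, hyt, r, hrV, hpair, hor⟩
  rw [rankFn_realize hsucc _ _ _ (by simpa using htV) (by simpa using hgV)] at hRank
  simp only [Fin.cons_succ, Fin.cons_zero] at hRank
  rw [memPair_realize hsucc _ _ _ _ (by simpa using hy) (by simpa using hrV)
    (by simpa using hgV)] at hpair
  simp only [Fin.cons_succ, Fin.cons_zero] at hpair
  rcases hRank with ⟨htr, htot, hmono, htight⟩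
  have hrr : r.rank = (v y).rank := rankFn_sound htr hmono htot htight (v y) hyt r hpair
  rcases hor with h' | h'
  · exact hrr ▸ (ZFSet.rank_lt_of_mem h').le
  · exact hrr ▸ (h' ▸ le_rfl)

theorem psiGe_sound (hsucc : ∀ o : Ordinal, o < lam.rank → Order.succ o < lam.rank) {n} (y a : Fin n) (v : Fin n → ZFSet)
    (hy : v y ∈ VSet lam) (ha : v a ∈ VSet lam)
    (h : Realize (VSet lam) (psiGeF y a) v) : (v a).rank ≤ (v y).rank := by
  simp only [psiGeF, realize_ex, realize_and, realize_mem, realize_or, realize_eq,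
    Fin.cons_succ, Fin.cons_zero] at h
  rcases h with ⟨t, htV, g, hgV, hRank, hyt, r, hrV, hpair, hor⟩
  rw [rankFn_realize hsucc _ _ _ (by simpa using htV) (by simpa using hgV)] at hRank
  simp only [Fin.cons_succ, Fin.cons_zero] at hRank
  rw [memPair_realize hsucc _ _ _ _ (by simpa using hy) (by simpa using hrV)
    (by simpa using hgV)] at hpair
  simp only [Fin.cons_succ, Fin.cons_zero] at hpair
  rcases hRank with ⟨htr, htot, hmono, htight⟩
  have hrr : r.rank = (v y).rank := rankFn_sound htr hmono htot htight (v y) hyt r hpair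
  rcases hor with h' | h'
  · exact hrr ▸ (ZFSet.rank_lt_of_mem h').le
  · exact hrr ▸ (h' ▸ le_rfl)

/-- the canonical certificate satisfies the rank-function formula -/
theorem rankFn_canonical_realize (hsucc : ∀ o : Ordinal, o < lam.rank → Order.succ o < lam.rank) (yv : ZFSet) (hyv : yv ∈ VSet lam) :
    ∃ t g : ZFSet, t ∈ VSet lam ∧ g ∈ VSet lam ∧ yv ∈ t ∧
      ZFSet.pair yv (ordOf yv) ∈ g ∧
      (t.IsTransitive ∧
       (∀ u ∈ t, ∃ r, ZFSet.pair u r ∈ g) ∧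
       (∀ u ∈ t, ∀ r, ZFSet.pair u r ∈ g →
          ∀ u' ∈ u, ∀ r', ZFSet.pair u' r' ∈ g → r' ∈ r) ∧
       (∀ u ∈ t, ∀ r, ZFSet.pair u r ∈ g →
          ∀ b ∈ r, ∃ u' ∈ u, ∃ r', ZFSet.pair u' r' ∈ g ∧ (b ∈ r' ∨ b = r'))) := by
  obtain ⟨t, g, htr, hyt, htrank, hgrank, hgonly, hgmem⟩ := rankFn_complete yv
  have htV : t ∈ VSet lam := by
    show t.rank < lam.rank
    rw [htrank]; exact hsucc _ hyv
  have hgV : g ∈ VSet lam := by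
    show g.rank < lam.rank
    exact lt_of_le_of_lt hgrank (hsucc _ (hsucc _ (hsucc _ hyv)))
  refine ⟨t, g, htV, hgV, hyt, hgmem yv hyt, htr, fun u hu => ⟨ordOf u, hgmem u hu⟩,
    ?_, ?_⟩
  · intro u hu r hr u' hu' r' hr'
    rw [hgonly u hu r hr, hgonly u' (htr.mem_trans hu' hu) r' hr']
    exact (isOrd_ordOf u').mem_of_rank_lt (isOrd_ordOf u)
      (by rw [rank_ordOf, rank_ordOf]; exact ZFSet.rank_lt_of_mem hu')
  · intro u hu r hr b hb
    rw [hgonly u hu r hr] at hb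
    have hbOrd : IsOrd b := (isOrd_ordOf u).mem hb
    have hbrank : b.rank < u.rank := by
      have := ZFSet.rank_lt_of_mem hb
      rwa [rank_ordOf] at this
    rcases ZFSet.lt_rank_iff.1 hbrank with ⟨u', hu', hle⟩
    refine ⟨u', hu', ordOf u', hgmem u' (htr.mem_trans hu' hu), ?_⟩
    rcases isOrd_trichot b hbOrd (ordOf u') (isOrd_ordOf u') with h | h | h
    · exact Or.inl h
    · exact Or.inr h
    · exfalso
      have := ZFSet.rank_lt_of_mem h
      rw [rank_ordOf] at this
      exact absurd (lt_of_le_of_lt hle this) (lt_irrefl _)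

theorem psiLe_complete (hsucc : ∀ o : Ordinal, o < lam.rank → Order.succ o < lam.rank) {n} (y a : Fin n) (v : Fin n → ZFSet)
    (hy : v y ∈ VSet lam) (ha : v a ∈ VSet lam) (haOrd : IsOrd (v a))
    (hle : (v y).rank ≤ (v a).rank) : Realize (VSet lam) (psiLeF y a) v := by
  obtain ⟨t, g, htV, hgV, hyt, hpair, hprops⟩ := rankFn_canonical_realize hsucc (v y) hy
  simp only [psiLeF, realize_ex, realize_and, realize_mem, realize_or, realize_eq,
    Fin.cons_succ, Fin.cons_zero]
  have hordV : ordOf (v y) ∈ VSet lam := by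
    show (ordOf (v y)).rank < lam.rank
    rw [rank_ordOf]; exact hy
  refine ⟨t, htV, g, hgV, ?_, hyt, ordOf (v y), hordV, ?_, ?_⟩
  · rw [rankFn_realize hsucc _ _ _ (by simpa using htV) (by simpa using hgV)]
    simpa using hprops
  · rw [memPair_realize hsucc _ _ _ _ (by simpa using hy) (by simpa using hordV)
      (by simpa using hgV)]
    simpa using hpair
  · rcases isOrd_trichot (ordOf (v y)) (isOrd_ordOf _) (v a) haOrd with h | h | h
    · exact Or.inl h
    · exact Or.inr h
    · exfalso
      have := ZFSet.rank_lt_of_mem h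
      rw [rank_ordOf] at this
      exact absurd (lt_of_lt_of_le this hle) (lt_irrefl _)

theorem psiGe_complete (hsucc : ∀ o : Ordinal, o < lam.rank → Order.succ o < lam.rank) {n} (y a : Fin n) (v : Fin n → ZFSet)
    (hy : v y ∈ VSet lam) (ha : v a ∈ VSet lam) (haOrd : IsOrd (v a))
    (hge : (v a).rank ≤ (v y).rank) : Realize (VSet lam) (psiGeF y a) v := by
  obtain ⟨t, g, htV, hgV, hyt, hpair, hprops⟩ := rankFn_canonical_realize hsucc (v y) hy
  simp only [psiGeF, realize_ex, realize_and, realize_mem, realize_or, realize_eq,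
    Fin.cons_succ, Fin.cons_zero]
  have hordV : ordOf (v y) ∈ VSet lam := by
    show (ordOf (v y)).rank < lam.rank
    rw [rank_ordOf]; exact hy
  refine ⟨t, htV, g, hgV, ?_, hyt, ordOf (v y), hordV, ?_, ?_⟩
  · rw [rankFn_realize hsucc _ _ _ (by simpa using htV) (by simpa using hgV)]
    simpa using hprops
  · rw [memPair_realize hsucc _ _ _ _ (by simpa using hy) (by simpa using hordV)
      (by simpa using hgV)]
    simpa using hpair
  · rcases isOrd_trichot (v a) haOrd (ordOf (v y)) (isOrd_ordOf _) with h | h | h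
    · exact Or.inl h
    · exact Or.inr h
    · exfalso
      have := ZFSet.rank_lt_of_mem h
      exact absurd (lt_of_lt_of_le this (by rw [rank_ordOf]; exact hge)) (lt_irrefl _)

end Psi
section LimitTransfer

variable {lam : ZFSet} {M : Set ZFSet}

/-- every member of `M` has an ordinal in `M` above its rank -/
theorem ordRankCover (hM : Prec M (VSet lam))
    (hsucc : ∀ o : Ordinal, o < lam.rank → Order.succ o < lam.rank)
    {x : ZFSet} (hx : x ∈ M) : ∃ a ∈ M, IsOrd a ∧ x.rank ≤ a.rank := by
  set φ : SF 1 := SF.ex ((ordF 0).and (psiLeF (0 : Fin 1).succ 0)) with hφ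
  have hxV := memV_of_memM hM hx
  have hordV : ordOf x ∈ VSet lam := by
    show (ordOf x).rank < lam.rank
    rw [rank_ordOf]; exact hxV
  have hsat : Realize (VSet lam) φ (Fin.cons x Fin.elim0) := by
    refine ⟨ordOf x, hordV, ?_⟩
    rw [realize_and, ordF_realize 0 _ (by simpa using hordV)]
    refine ⟨isOrd_ordOf x, ?_⟩
    refine psiLe_complete hsucc _ _ _ (by simpa using hxV) (by simpa using hordV)
      (by simpa using isOrd_ordOf x) ?_
    simp only [Fin.cons_succ, Fin.cons_zero]
    rw [rank_ordOf]
  rcases prec_ex hM _ _ (fun i => by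
    refine Fin.cases (by simpa using hx) (fun j => j.elim0) i) hsat with ⟨a, haM, hsata⟩
  rw [realize_and] at hsata
  have haV := memV_of_memM hM haM
  refine ⟨a, haM, (ordF_realize 0 _ (by simpa using haV)).1 hsata.1, ?_⟩
  have := psiLe_sound hsucc _ _ _ (by simpa using hxV) (by simpa using haV) hsata.2
  simpa using this

/-- any rank below an `M`-ordinal is bounded by the rank of an `M`-member of it -/
theorem boundInOrd (hM : Prec M (VSet lam))
    (hsucc : ∀ o : Ordinal, o < lam.rank → Order.succ o < lam.rank)
    {a y : ZFSet} (haM : a ∈ M) (haOrd : IsOrd a) (hy : y ∈ M)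
    (hlt : y.rank < a.rank) : ∃ b ∈ M, b ∈ a ∧ y.rank ≤ b.rank := by
  set φ : SF 2 := SF.ex ((SF.mem 0 ((0 : Fin 1).succ.succ)).and
    (psiLeF (0 : Fin 2).succ 0)) with hφ
  have hyV := memV_of_memM hM hy
  have haV := memV_of_memM hM haM
  have hordV : ordOf y ∈ VSet lam := by
    show (ordOf y).rank < lam.rank
    rw [rank_ordOf]; exact hyV
  have hsat : Realize (VSet lam) φ (Fin.cons y (Fin.cons a Fin.elim0)) := by
    refine ⟨ordOf y, hordV, ?_⟩
    rw [realize_and]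
    constructor
    · simp only [realize_mem, Fin.cons_succ, Fin.cons_zero]
      exact (isOrd_ordOf y).mem_of_rank_lt haOrd (by rw [rank_ordOf]; exact hlt)
    · refine psiLe_complete hsucc _ _ _ (by simpa using hyV) (by simpa using hordV)
        (by simpa using isOrd_ordOf y) ?_
      simp only [Fin.cons_succ, Fin.cons_zero]
      rw [rank_ordOf]
  rcases prec_ex hM _ _ (fun i => by
    refine Fin.cases ?_ (fun j => ?_) i
    · simpa using hy
    · simpa using Fin.cases (by simpa using haM) (fun k => k.elim0) j) hsat with ⟨b, hbM, hsatb⟩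
  rw [realize_and] at hsatb
  have hbV := memV_of_memM hM hbM
  have hba : b ∈ a := by simpa using hsatb.1
  refine ⟨b, hbM, hba, ?_⟩
  have := psiLe_sound hsucc _ _ _ (by simpa using hyV) (by simpa using hbV) hsatb.2
  simpa using this

/-- below the rank of an `M`-set there are `M`-members of every ordinal rank -/
theorem elemOfRank (hM : Prec M (VSet lam))
    (hsucc : ∀ o : Ordinal, o < lam.rank → Order.succ o < lam.rank)
    {z b : ZFSet} (hz : z ∈ M) (hbM : b ∈ M) (hbOrd : IsOrd b)
    (hlt : b.rank < z.rank) : ∃ y ∈ M, y ∈ z ∧ b.rank ≤ y.rank := by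
  set φ : SF 2 := SF.ex ((SF.mem 0 (0 : Fin 2).succ).and
    (psiGeF 0 ((0 : Fin 1).succ.succ))) with hφ
  have hzV := memV_of_memM hM hz
  have hbV := memV_of_memM hM hbM
  rcases ZFSet.lt_rank_iff.1 hlt with ⟨y, hyz, hle⟩
  have hyV : y ∈ VSet lam := memV_of_mem hzV hyz
  have hsat : Realize (VSet lam) φ (Fin.cons z (Fin.cons b Fin.elim0)) := by
    refine ⟨y, hyV, ?_⟩
    rw [realize_and]
    constructor
    · simp only [realize_mem, Fin.cons_succ, Fin.cons_zero]
      exact hyz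
    · refine psiGe_complete hsucc _ _ _ (by simpa using hyV) (by simpa using hbV)
        (by simpa using hbOrd) ?_
      simpa using hle
  rcases prec_ex hM _ _ (fun i => by
    refine Fin.cases ?_ (fun j => ?_) i
    · simpa using hz
    · simpa using Fin.cases (by simpa using hbM) (fun k => k.elim0) j) hsat with ⟨w, hwM, hsatw⟩
  rw [realize_and] at hsatw
  have hwV := memV_of_memM hM hwM
  refine ⟨w, hwM, by simpa using hsatw.1, ?_⟩
  have := psiGe_sound hsucc _ _ _ (by simpa using hwV) (by simpa using hbV) hsatw.2
  simpa using this

/-- the true rank-initial segment of any `M`-ordinal belongs to `M` -/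
theorem VzfInM (hM : Prec M (VSet lam))
    (hsucc : ∀ o : Ordinal, o < lam.rank → Order.succ o < lam.rank)
    {a : ZFSet} (haM : a ∈ M) (haOrd : IsOrd a) : Vzf a ∈ M := by
  set ψ : SF 2 := SF.all (SF.iff (.mem 0 (0 : Fin 2).succ)
    (SF.bex ((0 : Fin 1).succ.succ) (psiLeF (0 : Fin 3).succ 0))) with hψ
  set φ : SF 1 := SF.ex ψ with hφ
  have haV := memV_of_memM hM haM
  have key : ∀ w : ZFSet, w ∈ VSet lam →
      (Realize (VSet lam) ψ (Fin.cons w (Fin.cons a Fin.elim0)) ↔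
        ∀ z, z ∈ VSet lam → (z ∈ w ↔ z.rank < a.rank)) := by
    intro w hwV
    rw [hψ, realize_all]
    apply forall_congr'
    intro z
    constructor
    · intro h hzV
      have h2 := h hzV
      rw [realize_iff, realize_bex] at h2
      simp only [realize_mem, Fin.cons_succ, Fin.cons_zero] at h2
      constructor
      · intro hzw
        rcases h2.1 hzw with ⟨b, hbV, hba, hsat⟩
        have := psiLe_sound hsucc _ _ _ (by simpa using hzV) (by simpa using hbV) hsat
        simp only [Fin.cons_succ, Fin.cons_zero] at this
        exact lt_of_le_of_lt this (ZFSet.rank_lt_of_mem hba)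
      · intro hrank
        rcases ZFSet.lt_rank_iff.1 hrank with ⟨b, hba, hle⟩
        have hbV : b ∈ VSet lam := memV_of_mem haV hba
        refine h2.2 ⟨b, hbV, hba, ?_⟩
        refine psiLe_complete hsucc _ _ _ (by simpa using hzV) (by simpa using hbV)
          (by simpa using haOrd.mem hba) (by simpa using hle)
      -- done
    · intro h hzV
      rw [realize_iff, realize_bex]
      simp only [realize_mem, Fin.cons_succ, Fin.cons_zero]
      constructor
      · intro hzw
        have hrank := (h hzV).1 hzw
        rcases ZFSet.lt_rank_iff.1 hrank with ⟨b, hba, hle⟩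
        have hbV : b ∈ VSet lam := memV_of_mem haV hba
        refine ⟨b, hbV, hba, ?_⟩
        refine psiLe_complete hsucc _ _ _ (by simpa using hzV) (by simpa using hbV)
          (by simpa using haOrd.mem hba) (by simpa using hle)
      · rintro ⟨b, hbV, hba, hsat⟩
        have := psiLe_sound hsucc _ _ _ (by simpa using hzV) (by simpa using hbV) hsat
        simp only [Fin.cons_succ, Fin.cons_zero] at this
        exact (h hzV).2 (lt_of_le_of_lt this (ZFSet.rank_lt_of_mem hba))
  have hVzfV : Vzf a ∈ VSet lam := by
    show (Vzf a).rank < lam.rank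
    rw [rank_Vzf]; exact haV
  have hsat : Realize (VSet lam) φ (Fin.cons a Fin.elim0) := by
    refine ⟨Vzf a, hVzfV, ?_⟩
    rw [show (Fin.cons (Vzf a) (Fin.cons a Fin.elim0) : Fin 2 → ZFSet) =
      Fin.cons (Vzf a) (Fin.cons a Fin.elim0) from rfl]
    rw [key (Vzf a) hVzfV]
    intro z _
    exact mem_Vzf
  rcases prec_ex hM _ _ (fun i => by
    refine Fin.cases (by simpa using haM) (fun j => j.elim0) i) hsat with ⟨w, hwM, hsatw⟩
  have hwV := memV_of_memM hM hwM
  rw [key w hwV] at hsatw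
  have : w = Vzf a := by
    apply ZFSet.ext
    intro z
    rw [mem_Vzf]
    constructor
    · intro hz
      exact (hsatw z (memV_of_mem hwV hz)).1 hz
    · intro hz
      exact (hsatw z (lt_trans hz haV)).2 hz
  rwa [this] at hwM

end LimitTransfer
section ForwardLimit

variable {lam : ZFSet} {M : Set ZFSet}


theorem clps_inj (hM : Prec M (VSet lam)) :
    ∀ x, x ∈ M → ∀ y, y ∈ M → clps M x = clps M y → x = y := by
  intro x
  induction x using ZFSet.inductionOn with
  | _ x IH =>
    intro hx y hy heq
    refine M_ext hM hx hy fun z hz => ⟨fun hzx => ?_, fun hzy => ?_⟩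
    · have h1 : clps M z ∈ clps M y := heq ▸ clps_mem hzx hz
      rcases mem_clps.1 h1 with ⟨w, hwy, hwM, hw⟩
      have h2 : z = w := IH z hzx hz w hwM hw.symm
      exact h2 ▸ hwy
    · have h1 : clps M z ∈ clps M x := heq.symm ▸ clps_mem hzy hz
      rcases mem_clps.1 h1 with ⟨w, hwx, hwM, hw⟩
      have h2 : w = z := IH w hwx hwM z hz hw
      exact h2 ▸ hwx

theorem clps_mem_iff (hM : Prec M (VSet lam)) {x y : ZFSet} (hx : x ∈ M) (hy : y ∈ M) :
    x ∈ y ↔ clps M x ∈ clps M y := by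
  constructor
  · intro h
    exact clps_mem h hx
  · intro h
    rcases mem_clps.1 h with ⟨w, hwy, hwM, hw⟩
    have := clps_inj hM w hwM x hx hw
    exact this ▸ hwy

theorem clps_rank_le_right (hM : Prec M (VSet lam))
    (hsucc : ∀ o : Ordinal, o < lam.rank → Order.succ o < lam.rank) :
    ∀ z, z ∈ M → ∀ a, a ∈ M → IsOrd a → z.rank ≤ a.rank →
      (clps M z).rank ≤ (clps M a).rank := by
  intro z
  induction z using ZFSet.inductionOn with
  | _ z IH =>
    intro hz a haM haOrd hle
    rw [ZFSet.rank_le_iff]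
    intro w hw
    rcases mem_clps.1 hw with ⟨y, hyz, hyM, hyw⟩
    rcases boundInOrd hM hsucc haM haOrd hyM
      (lt_of_lt_of_le (ZFSet.rank_lt_of_mem hyz) hle) with ⟨b, hbM, hba, hyb⟩
    have h1 := IH y hyz hyM b hbM (haOrd.mem hba) hyb
    have h2 : clps M b ∈ clps M a := clps_mem hba hbM
    calc w.rank = (clps M y).rank := by rw [hyw]
      _ ≤ (clps M b).rank := h1
      _ < (clps M a).rank := ZFSet.rank_lt_of_mem h2

theorem clps_rank_le_left (hM : Prec M (VSet lam))
    (hsucc : ∀ o : Ordinal, o < lam.rank → Order.succ o < lam.rank) :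
    ∀ a, a ∈ M → IsOrd a → ∀ z, z ∈ M → a.rank ≤ z.rank →
      (clps M a).rank ≤ (clps M z).rank := by
  intro a
  induction a using ZFSet.inductionOn with
  | _ a IH =>
    intro haM haOrd z hzM hle
    rw [ZFSet.rank_le_iff]
    intro w hw
    rcases mem_clps.1 hw with ⟨b, hba, hbM, hbw⟩
    rcases elemOfRank hM hsucc hzM hbM (haOrd.mem hba)
      (lt_of_lt_of_le (ZFSet.rank_lt_of_mem hba) hle) with ⟨y, hyM, hyz, hby⟩
    have h1 := IH b hba hbM (haOrd.mem hba) y hyM hby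
    have h2 : clps M y ∈ clps M z := clps_mem hyz hyM
    calc w.rank = (clps M b).rank := by rw [hbw]
      _ ≤ (clps M y).rank := h1
      _ < (clps M z).rank := ZFSet.rank_lt_of_mem h2

theorem surj_aux (hM : Prec M (VSet lam)) (hG : GuessingModel M ℵ₀)
    (hsucc : ∀ o : Ordinal, o < lam.rank → Order.succ o < lam.rank) :
    ∀ w a, a ∈ M → IsOrd a → w.rank ≤ (clps M a).rank → ∃ x ∈ M, clps M x = w := by
  intro w
  induction w using ZFSet.inductionOn with
  | _ w IH =>
    intro a haM haOrd hle
    have hVa : Vzf a ∈ M := VzfInM hM hsucc haM haOrd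
    have hcov : ∀ z, z ∈ M → clps M z ∈ w → z ∈ Vzf a := by
      intro z hzM hzw
      rw [mem_Vzf]
      by_contra hcon
      push_neg at hcon
      have h1 := clps_rank_le_left hM hsucc a haM haOrd z hzM hcon
      have h2 : (clps M z).rank < (clps M a).rank :=
        lt_of_lt_of_le (ZFSet.rank_lt_of_mem hzw) hle
      exact absurd (lt_of_le_of_lt h1 h2) (lt_irrefl _)
    set D := ZFSet.sep (fun z => z ∈ M ∧ clps M z ∈ w) (Vzf a) with hD
    rcases hG (Vzf a) hVa D (sep_subset' _ _) (approx_free hM D) with ⟨e, heM, _, htrace⟩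
    refine ⟨e, heM, ?_⟩
    apply ZFSet.ext
    intro u
    constructor
    · intro hu
      rcases mem_clps.1 hu with ⟨z, hze, hzM, hzu⟩
      have hz : z ∈ D := (htrace z hzM).1 hze
      rw [← hzu]
      exact (ZFSet.mem_sep.1 hz).2.2
    · intro hu
      have hur : u.rank ≤ (clps M a).rank :=
        le_of_lt (lt_of_lt_of_le (ZFSet.rank_lt_of_mem hu) hle)
      rcases IH u hu a haM haOrd hur with ⟨x, hxM, hxu⟩
      have hxD : x ∈ D := ZFSet.mem_sep.2 ⟨hcov x hxM (hxu.symm ▸ hu), hxM, hxu.symm ▸ hu⟩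
      have hxe : x ∈ e := (htrace x hxM).2 hxD
      exact hxu ▸ clps_mem hxe hxM

theorem forward_limit {lam : ZFSet.{0}} {M : Set ZFSet.{0}}
    (hM : Prec M (VSet lam)) (hG : GuessingModel M ℵ₀)
    (hsucc : ∀ o : Ordinal, o < lam.rank → Order.succ o < lam.rank) :
    ∃ (γ : ZFSet.{0}) (π : ZFSet.{0} → ZFSet.{0}), IsOrd γ ∧ Set.BijOn π M (VSet γ) ∧
      ∀ x ∈ M, ∀ y ∈ M, (x ∈ y ↔ π x ∈ π y) := by
  classical
  set TZ : ZFSet := zimage (clps M) (ZFSet.sep (fun z => z ∈ M) (Vzf lam)) with hTZ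
  set γ : ZFSet := ZFSet.sep (fun o => ∃ a, a ∈ M ∧ IsOrd a ∧ clps M a = o) TZ with hγdef
  have hmemγ : ∀ a, a ∈ M → IsOrd a → clps M a ∈ γ := by
    intro a haM haOrd
    refine ZFSet.mem_sep.2 ⟨?_, a, haM, haOrd, rfl⟩
    refine mem_zimage.2 ⟨a, ?_, rfl⟩
    exact ZFSet.mem_sep.2 ⟨mem_Vzf.2 (hM.1 haM), haM⟩
  have hγOrd : IsOrd γ := by
    constructor
    · intro o ho
      rcases ZFSet.mem_sep.1 ho with ⟨hoT, a, haM, haOrd, hoa⟩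
      refine zsubset_iff.2 fun z hz => ?_
      rw [← hoa] at hz
      rcases mem_clps.1 hz with ⟨b, hba, hbM, hbz⟩
      rw [← hbz]
      exact hmemγ b hbM (haOrd.mem hba)
    · intro o ho
      rcases ZFSet.mem_sep.1 ho with ⟨_, a, _, haOrd, hoa⟩
      rw [← hoa]
      exact clps_transitive haOrd.transitive
  refine ⟨γ, clps M, hγOrd, ⟨?_, ?_, ?_⟩, ?_⟩
  · intro x hx
    rcases ordRankCover hM hsucc hx with ⟨a, haM, haOrd, hle⟩
    have h1 := clps_rank_le_right hM hsucc x hx a haM haOrd hle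
    exact lt_of_le_of_lt h1 (ZFSet.rank_lt_of_mem (hmemγ a haM haOrd))
  · intro x hx y hy h
    exact clps_inj hM x hx y hy h
  · intro w hw
    have hw' : w.rank < γ.rank := hw
    rcases ZFSet.lt_rank_iff.1 hw' with ⟨o, hoγ, hle⟩
    rcases ZFSet.mem_sep.1 hoγ with ⟨_, a, haM, haOrd, hoa⟩
    rcases surj_aux hM hG hsucc w a haM haOrd (by rwa [hoa]) with ⟨x, hxM, hxw⟩
    exact ⟨x, hxM, hxw⟩
  · intro x hx y hy
    exact clps_mem_iff hM hx hy

end ForwardLimit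
section Backward

universe v

theorem backward {lam : ZFSet.{0}} {M : Set ZFSet.{0}} (hM : Prec M (VSet lam))
    (h : ∃ (γ : ZFSet.{v}) (π : ZFSet.{0} → ZFSet.{v}), IsOrd γ ∧ Set.BijOn π M (VSet γ) ∧
      ∀ x ∈ M, ∀ y ∈ M, (x ∈ y ↔ π x ∈ π y)) :
    GuessingModel M ℵ₀ := by
  rcases h with ⟨γ, π, _, ⟨hmaps, hinj, hsurj⟩, hiff⟩
  intro X hX d hd _
  set e' : ZFSet.{v} := ZFSet.sep (fun w => ∃ z, z ∈ M ∧ z ∈ d ∧ π z = w) (π X) with he'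
  have he'V : e' ∈ VSet γ :=
    lt_of_le_of_lt (rank_le_of_subset (sep_subset' _ _)) (hmaps hX)
  rcases hsurj he'V with ⟨eb, hebM, hebe⟩
  have key : ∀ z, z ∈ M → (z ∈ eb ↔ z ∈ d ∧ z ∈ X) := by
    intro z hz
    rw [hiff z hz eb hebM, hebe]
    constructor
    · intro hze'
      rcases ZFSet.mem_sep.1 hze' with ⟨hzX, z', hz'M, hz'd, hz'e⟩
      have hz'z : z' = z := hinj hz'M hz hz'e
      exact ⟨hz'z ▸ hz'd, (hiff z hz X hX).2 hzX⟩
    · rintro ⟨hzd, hzX⟩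
      exact ZFSet.mem_sep.2 ⟨(hiff z hz X hX).1 hzX, z, hz, hzd, rfl⟩
  have heM : eb ∩ X ∈ M := inter_memM hM hebM hX
  refine ⟨eb ∩ X, heM, ?_, ?_⟩
  · exact zsubset_iff.2 fun z hz => (ZFSet.mem_inter.1 hz).2
  · intro z hz
    rw [ZFSet.mem_inter]
    constructor
    · rintro ⟨h1, _⟩
      exact ((key z hz).1 h1).1
    · intro hzd
      have hzX := zsubset_iff.1 hd hzd
      exact ⟨(key z hz).2 ⟨hzd, hzX⟩, hzX⟩

end Backward
section ForwardSucc

theorem insert_tcl'_transitive (z : ZFSet) : (insert z (tcl' z)).IsTransitive := by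
  intro w hw
  rcases ZFSet.mem_insert_iff.1 hw with rfl | hw'
  · exact (subset_tcl').trans (zsubset_iff.2 fun q hq => ZFSet.mem_insert_of_mem _ hq)
  · exact ((tcl'_transitive z).subset_of_mem hw').trans
      (zsubset_iff.2 fun q hq => ZFSet.mem_insert_of_mem _ hq)

theorem rank_insert_tcl' (z : ZFSet) : (insert z (tcl' z)).rank = Order.succ z.rank := by
  rw [ZFSet.rank_insert, rank_tcl']
  exact max_eq_left (Order.le_succ _)

/-- In the successor case, the top rank-initial segment belongs to `M`. -/
theorem VzfMuInM {lam : ZFSet.{0}} {M : Set ZFSet.{0}} (hM : Prec M (VSet lam))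
    {mu : ZFSet} {O : Ordinal} (hΛ : lam.rank = Order.succ O) (hmuO : mu.rank = O) :
    Vzf mu ∈ M := by
  set ψ : SF 1 := SF.all (SF.iff (.mem 0 (0 : Fin 1).succ)
    (SF.ex ((transF 0).and (.mem (0 : Fin 2).succ 0)))) with hψ
  have hmu : mu.rank < lam.rank := by rw [hΛ, hmuO]; exact Order.lt_succ O
  have hVmuV : Vzf mu ∈ VSet lam := by
    show (Vzf mu).rank < lam.rank
    rw [rank_Vzf]; exact hmu
  have keysem : ∀ z : ZFSet, z ∈ VSet lam →
      ((∃ t, t ∈ VSet lam ∧ t.IsTransitive ∧ z ∈ t) ↔ z.rank < O) := by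
    intro z hzV
    constructor
    · rintro ⟨t, htV, _, hzt⟩
      have h1 : Order.succ z.rank ≤ t.rank := Order.succ_le_of_lt (ZFSet.rank_lt_of_mem hzt)
      have h2 : Order.succ z.rank < Order.succ O := by
        rw [← hΛ]; exact lt_of_le_of_lt h1 htV
      exact (Order.succ_lt_succ_iff).1 h2
    · intro hzO
      refine ⟨insert z (tcl' z), ?_, insert_tcl'_transitive z, ZFSet.mem_insert z _⟩
      show (insert z (tcl' z)).rank < lam.rank
      rw [rank_insert_tcl', hΛ]
      exact Order.succ_lt_succ hzO
  have ψsem : ∀ w : ZFSet, w ∈ VSet lam →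
      (Realize (VSet lam) ψ (Fin.cons w Fin.elim0) ↔
        ∀ z, z ∈ VSet lam → (z ∈ w ↔ ∃ t, t ∈ VSet lam ∧ t.IsTransitive ∧ z ∈ t)) := by
    intro w hwV
    rw [hψ, realize_all]
    apply forall_congr'
    intro z
    constructor
    · intro h hz
      have h2 := h hz
      rw [realize_iff, realize_ex] at h2
      simp only [realize_and, realize_mem, Fin.cons_succ, Fin.cons_zero] at h2
      constructor
      · intro hzw
        rcases h2.1 hzw with ⟨t, htV, htreal, hzt⟩
        rw [transF_realize 0 _ (by simpa using htV)] at htreal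
        simp only [Fin.cons_zero] at htreal
        exact ⟨t, htV, htreal, hzt⟩
      · rintro ⟨t, htV, htr, hzt⟩
        refine h2.2 ⟨t, htV, ?_, hzt⟩
        rw [transF_realize 0 _ (by simpa using htV)]
        simpa using htr
    · intro h hz
      rw [realize_iff, realize_ex]
      simp only [realize_and, realize_mem, Fin.cons_succ, Fin.cons_zero]
      constructor
      · intro hzw
        rcases (h hz).1 hzw with ⟨t, htV, htr, hzt⟩
        refine ⟨t, htV, ?_, hzt⟩
        rw [transF_realize 0 _ (by simpa using htV)]
        simpa using htr
      · rintro ⟨t, htV, htreal, hzt⟩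
        rw [transF_realize 0 _ (by simpa using htV)] at htreal
        simp only [Fin.cons_zero] at htreal
        exact (h hz).2 ⟨t, htV, htreal, hzt⟩
  have hsat : Realize (VSet lam) (SF.ex ψ) Fin.elim0 := by
    refine ⟨Vzf mu, hVmuV, ?_⟩
    rw [ψsem (Vzf mu) hVmuV]
    intro z hzV
    rw [mem_Vzf, hmuO]
    exact (keysem z hzV).symm
  rcases prec_ex hM _ _ (fun i => i.elim0) hsat with ⟨w, hwM, hsatw⟩
  have hwV := memV_of_memM hM hwM
  rw [ψsem w hwV] at hsatw
  have hweq : w = Vzf mu := by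
    apply ZFSet.ext
    intro z
    rw [mem_Vzf, hmuO]
    constructor
    · intro hz
      exact (keysem z (memV_of_mem hwV hz)).1 ((hsatw z (memV_of_mem hwV hz)).1 hz)
    · intro hz
      have hzV : z ∈ VSet lam := by
        show z.rank < lam.rank
        rw [hΛ]
        exact lt_trans hz (Order.lt_succ O)
      exact (hsatw z hzV).2 ((keysem z hzV).2 hz)
  rwa [hweq] at hwM

theorem forward_succ {lam : ZFSet.{0}} {M : Set ZFSet.{0}} (hlam : IsOrd lam)
    (hM : Prec M (VSet lam)) (hG : GuessingModel M ℵ₀)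
    {O : Ordinal} (hΛ : lam.rank = Order.succ O)
    (IH : ∀ mu : ZFSet.{0}, mu.rank < lam.rank → IsOrd mu →
      ∀ M₀ : Set ZFSet.{0}, Prec M₀ (VSet mu) → GuessingModel M₀ ℵ₀ →
        ∃ (γ : ZFSet.{0}) (π : ZFSet.{0} → ZFSet.{0}), IsOrd γ ∧
          Set.BijOn π M₀ (VSet γ) ∧ ∀ x ∈ M₀, ∀ y ∈ M₀, (x ∈ y ↔ π x ∈ π y)) :
    ∃ (γ : ZFSet.{0}) (π : ZFSet.{0} → ZFSet.{0}), IsOrd γ ∧ Set.BijOn π M (VSet γ) ∧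
      ∀ x ∈ M, ∀ y ∈ M, (x ∈ y ↔ π x ∈ π y) := by
  classical
  -- the top von Neumann level
  have hex : ∃ mu ∈ lam, O ≤ mu.rank := by
    refine ZFSet.lt_rank_iff.1 ?_
    rw [hΛ]
    exact Order.lt_succ O
  rcases hex with ⟨mu, hmulam, hmuge⟩
  have hmuO : mu.rank = O := by
    refine le_antisymm ?_ hmuge
    have := ZFSet.rank_lt_of_mem hmulam
    rw [hΛ] at this
    exact Order.lt_succ_iff.1 this
  have hmuOrd : IsOrd mu := hlam.mem hmulam
  have hmuV : mu.rank < lam.rank := ZFSet.rank_lt_of_mem hmulam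
  have hrankM : ∀ x, x ∈ M → x.rank ≤ O := by
    intro x hx
    have := hM.1 hx
    rw [show (x ∈ VSet lam) = (x.rank < lam.rank) from rfl, hΛ] at this
    exact Order.lt_succ_iff.1 this
  have hVmuM : Vzf mu ∈ M := VzfMuInM hM hΛ hmuO
  set M₀ : Set ZFSet.{0} := M ∩ (VSet mu) with hM₀
  have elemM₀ : ∀ x, x ∈ M → ∀ z, z ∈ x → z ∈ M → z ∈ M₀ := by
    intro x hx z hzx hzM
    refine ⟨hzM, ?_⟩
    show z.rank < mu.rank
    rw [hmuO]
    exact lt_of_lt_of_le (ZFSet.rank_lt_of_mem hzx) (hrankM x hx)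
  have hVmuset : (Vzf mu).toSet = VSet mu := toSet_Vzf mu
  have hprec₀ : Prec M₀ (VSet mu) := by
    constructor
    · intro z hz
      exact hz.2
    · intro n φ v hv
      have h1 : Realize M₀ φ v ↔ Realize (M ∩ (Vzf mu).toSet) φ v := by
        rw [hVmuset]
      have h2 : Realize (M ∩ (Vzf mu).toSet) φ v ↔
          Realize M (SFrelv φ) (Fin.cons (Vzf mu) v) := (realize_relv φ _ v).symm
      have h3 : Realize M (SFrelv φ) (Fin.cons (Vzf mu) v) ↔
          Realize (VSet lam) (SFrelv φ) (Fin.cons (Vzf mu) v) := by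
        refine hM.2 _ _ fun i => ?_
        refine Fin.cases ?_ (fun j => ?_) i
        · simpa using hVmuM
        · simpa using (hv j).1
      have h4 : Realize (VSet lam) (SFrelv φ) (Fin.cons (Vzf mu) v) ↔
          Realize (VSet lam ∩ (Vzf mu).toSet) φ v := realize_relv φ _ v
      have h5 : VSet lam ∩ (Vzf mu).toSet = VSet mu := by
        rw [hVmuset]
        ext z
        constructor
        · rintro ⟨_, hz⟩
          exact hz
        · intro hz
          refine ⟨?_, hz⟩
          show z.rank < lam.rank
          calc z.rank < mu.rank := hz
            _ < lam.rank := hmuV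
      rw [h1, h2, h3, h4, h5]
  have hG₀ : GuessingModel M₀ ℵ₀ := by
    intro X hX d hd _
    rcases hG X hX.1 d hd (approx_free hM d) with ⟨e, heM, hesub, htr⟩
    have heV : e ∈ VSet mu := by
      show e.rank < mu.rank
      exact lt_of_le_of_lt (rank_le_of_subset hesub) hX.2
    exact ⟨e, ⟨heM, heV⟩, hesub, fun z hz => htr z hz.1⟩
  rcases IH mu hmuV hmuOrd M₀ hprec₀ hG₀ with ⟨γ₀, π₀, hγ₀, ⟨hm₀, hi₀, hs₀⟩, hiff₀⟩
  set π : ZFSet → ZFSet := fun x => zimage π₀ (ZFSet.sep (fun z => z ∈ M₀) x) with hπ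
  have mem_π : ∀ x u : ZFSet, u ∈ π x ↔ ∃ z, z ∈ x ∧ z ∈ M₀ ∧ π₀ z = u := by
    intro x u
    rw [hπ]
    simp only [mem_zimage, ZFSet.mem_sep]
    constructor
    · rintro ⟨z, ⟨h1, h2⟩, h3⟩
      exact ⟨z, h1, h2, h3⟩
    · rintro ⟨z, h1, h2, h3⟩
      exact ⟨z, ⟨h1, h2⟩, h3⟩
  have agree : ∀ x, x ∈ M₀ → π x = π₀ x := by
    intro x hx₀
    apply ZFSet.ext
    intro u
    rw [mem_π]
    constructor
    · rintro ⟨z, hzx, hzM₀, rfl⟩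
      exact (hiff₀ z hzM₀ x hx₀).1 hzx
    · intro hu
      have huV : u ∈ VSet γ₀ := memV_of_mem (hm₀ hx₀) hu
      rcases hs₀ huV with ⟨z, hzM₀, rfl⟩
      exact ⟨z, (hiff₀ z hzM₀ x hx₀).2 hu, hzM₀, rfl⟩
  set γ : ZFSet := insert γ₀ γ₀ with hγ
  have hγrank : γ.rank = Order.succ γ₀.rank := by
    rw [hγ, ZFSet.rank_insert]
    exact max_eq_left (Order.le_succ _)
  have hmaps : ∀ x, x ∈ M → π x ∈ VSet γ := by
    intro x hx
    show (π x).rank < γ.rank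
    rw [hγrank]
    refine Order.lt_succ_iff.2 ?_
    rw [ZFSet.rank_le_iff]
    intro u hu
    rcases (mem_π x u).1 hu with ⟨z, _, hzM₀, rfl⟩
    exact hm₀ hzM₀
  have hinjM : ∀ x, x ∈ M → ∀ y, y ∈ M → π x = π y → x = y := by
    intro x hx y hy heq
    refine M_ext hM hx hy fun z hz => ⟨fun hzx => ?_, fun hzy => ?_⟩
    · have hzM₀ : z ∈ M₀ := elemM₀ x hx z hzx hz
      have h1 : π₀ z ∈ π y := heq ▸ (mem_π x (π₀ z)).2 ⟨z, hzx, hzM₀, rfl⟩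
      rcases (mem_π y (π₀ z)).1 h1 with ⟨z', hz'y, hz'M₀, hz'z⟩
      have : z' = z := hi₀ hz'M₀ hzM₀ hz'z
      exact this ▸ hz'y
    · have hzM₀ : z ∈ M₀ := elemM₀ y hy z hzy hz
      have h1 : π₀ z ∈ π x := heq.symm ▸ (mem_π y (π₀ z)).2 ⟨z, hzy, hzM₀, rfl⟩
      rcases (mem_π x (π₀ z)).1 h1 with ⟨z', hz'x, hz'M₀, hz'z⟩
      have : z' = z := hi₀ hz'M₀ hzM₀ hz'z
      exact this ▸ hz'x
  have hsurj : ∀ w, w ∈ VSet γ → ∃ x ∈ M, π x = w := by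
    intro w hw
    have hwle : w.rank ≤ γ₀.rank := by
      have : w.rank < γ.rank := hw
      rw [hγrank] at this
      exact Order.lt_succ_iff.1 this
    rcases lt_or_eq_of_le hwle with hlt | heq
    · rcases hs₀ hlt with ⟨z, hzM₀, rfl⟩
      exact ⟨z, hzM₀.1, agree z hzM₀⟩
    · set D : ZFSet := ZFSet.sep (fun z => z ∈ M₀ ∧ π₀ z ∈ w) (Vzf mu) with hD
      rcases hG (Vzf mu) hVmuM D (sep_subset' _ _) (approx_free hM D) with ⟨e, heM, _, htr⟩
      refine ⟨e, heM, ?_⟩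
      apply ZFSet.ext
      intro u
      constructor
      · intro hu
        rcases (mem_π e u).1 hu with ⟨z, hze, hzM₀, rfl⟩
        have hzD : z ∈ D := (htr z hzM₀.1).1 hze
        exact (ZFSet.mem_sep.1 hzD).2.2
      · intro hu
        have huV : u ∈ VSet γ₀ := by
          show u.rank < γ₀.rank
          rw [← heq]
          exact ZFSet.rank_lt_of_mem hu
        rcases hs₀ huV with ⟨z, hzM₀, rfl⟩
        have hzD : z ∈ D := by
          refine ZFSet.mem_sep.2 ⟨?_, hzM₀, hu⟩
          rw [← zmem_toSet, hVmuset]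
          exact hzM₀.2
        have hze : z ∈ e := (htr z hzM₀.1).2 hzD
        exact (mem_π e (π₀ z)).2 ⟨z, hze, hzM₀, rfl⟩
  refine ⟨γ, π, hγ₀.insert_self, ⟨fun x hx => hmaps x hx, fun x hx y hy => hinjM x hx y hy, ?_⟩,
    ?_⟩
  · intro w hw
    rcases hsurj w hw with ⟨x, hxM, hxw⟩
    exact ⟨x, hxM, hxw⟩
  · intro x hx y hy
    constructor
    · intro hxy
      have hxM₀ : x ∈ M₀ := elemM₀ y hy x hxy hx
      rw [agree x hxM₀]
      exact (mem_π y (π₀ x)).2 ⟨x, hxy, hxM₀, rfl⟩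
    · intro h
      rcases (mem_π y (π x)).1 h with ⟨z, hzy, hzM₀, hzx⟩
      have hπz : π z = π x := by rw [agree z hzM₀, hzx]
      have : z = x := hinjM z hzM₀.1 x hx hπz
      exact this ▸ hzy

end ForwardSucc
section Master

theorem forward_zero {lam : ZFSet.{0}} {M : Set ZFSet.{0}} (hM : Prec M (VSet lam))
    (h0 : lam.rank = 0) :
    ∃ (γ : ZFSet.{0}) (π : ZFSet.{0} → ZFSet.{0}), IsOrd γ ∧ Set.BijOn π M (VSet γ) ∧
      ∀ x ∈ M, ∀ y ∈ M, (x ∈ y ↔ π x ∈ π y) := by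
  have hMempty : ∀ x, x ∉ M := by
    intro x hx
    have : x.rank < lam.rank := hM.1 hx
    rw [h0] at this
    exact absurd this not_lt_zero
  refine ⟨∅, id, isOrd_empty, ⟨?_, ?_, ?_⟩, ?_⟩
  · intro x hx
    exact absurd hx (hMempty x)
  · intro x hx
    exact absurd hx (hMempty x)
  · intro w hw
    have : w.rank < (∅ : ZFSet).rank := hw
    rw [ZFSet.rank_empty] at this
    exact absurd this not_lt_zero
  · intro x hx
    exact absurd hx (hMempty x)

theorem forward_all : ∀ (Λ : Ordinal.{0}) (lam : ZFSet.{0}), lam.rank = Λ → IsOrd lam →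
    ∀ M : Set ZFSet.{0}, Prec M (VSet lam) → GuessingModel M ℵ₀ →
      ∃ (γ : ZFSet.{0}) (π : ZFSet.{0} → ZFSet.{0}), IsOrd γ ∧ Set.BijOn π M (VSet γ) ∧
        ∀ x ∈ M, ∀ y ∈ M, (x ∈ y ↔ π x ∈ π y) := by
  intro Λ
  induction Λ using Ordinal.induction with
  | _ Λ IH =>
    intro lam hrank hlam M hM hG
    rcases Ordinal.zero_or_succ_or_isSuccLimit Λ with h0 | ⟨O, hO⟩ | hlim
    · exact forward_zero hM (hrank.trans h0)
    · refine forward_succ hlam hM hG (hrank.trans hO.symm) ?_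
      intro mu hmu hmuOrd M₀ hM₀ hG₀
      exact IH mu.rank (hrank ▸ hmu) mu rfl hmuOrd M₀ hM₀ hG₀
    · refine forward_limit hM hG ?_
      intro o ho
      rw [hrank]
      rw [hrank] at ho
      exact hlim.succ_lt ho
  
end Master
/-! ### Universe lifting of ZF sets -/

section ZLift

universe v

/-- lift a pre-set from universe 0 to universe `v` -/
def plift0 : PSet.{0} → PSet.{v}
  | ⟨α, A⟩ => ⟨ULift.{v, 0} α, fun i => plift0 (A i.down)⟩

theorem plift0_equiv : ∀ {x y : PSet.{0}}, PSet.Equiv x y →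
    PSet.Equiv (plift0.{v} x) (plift0.{v} y)
  | ⟨_, A⟩, ⟨_, B⟩, h =>
    ⟨fun i =>
      let ⟨b, hb⟩ := h.1 i.down
      ⟨⟨b⟩, plift0_equiv hb⟩,
     fun j =>
      let ⟨a, ha⟩ := h.2 j.down
      ⟨⟨a⟩, plift0_equiv ha⟩⟩

theorem plift0_equiv_rev : ∀ {x y : PSet.{0}},
    PSet.Equiv (plift0.{v} x) (plift0.{v} y) → PSet.Equiv x y
  | ⟨_, A⟩, ⟨_, B⟩, h =>
    ⟨fun a =>
      let ⟨b, hb⟩ := h.1 ⟨a⟩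
      ⟨b.down, plift0_equiv_rev hb⟩,
     fun b =>
      let ⟨a, ha⟩ := h.2 ⟨b⟩
      ⟨a.down, plift0_equiv_rev ha⟩⟩

theorem mem_plift0 : ∀ {x y : PSet.{0}}, x ∈ y → plift0.{v} x ∈ plift0.{v} y
  | _, ⟨_, B⟩, ⟨b, h⟩ => ⟨⟨b⟩, plift0_equiv h⟩

theorem mem_plift0_rev : ∀ {x y : PSet.{0}}, plift0.{v} x ∈ plift0.{v} y → x ∈ y
  | _, ⟨_, B⟩, ⟨j, h⟩ => ⟨j.down, plift0_equiv_rev h⟩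

theorem mem_plift0_elim : ∀ {z : PSet.{v}} {y : PSet.{0}}, z ∈ plift0.{v} y →
    ∃ x : PSet.{0}, x ∈ y ∧ PSet.Equiv z (plift0.{v} x)
  | _, ⟨_, B⟩, ⟨j, h⟩ => ⟨B j.down, PSet.Mem.mk B j.down, h⟩

/-- lift a ZF set from universe 0 to universe `v` -/
def zlift : ZFSet.{0} → ZFSet.{v} :=
  Quotient.lift (fun p => ZFSet.mk (plift0.{v} p)) fun _ _ h =>
    Quotient.sound (plift0_equiv h)

theorem zlift_mk (p : PSet.{0}) : zlift.{v} (ZFSet.mk p) = ZFSet.mk (plift0.{v} p) := rfl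

theorem zlift_mem_zlift {x y : ZFSet.{0}} : zlift.{v} x ∈ zlift.{v} y ↔ x ∈ y := by
  refine Quotient.inductionOn₂ x y fun a b => ?_
  show ZFSet.mk (plift0 a) ∈ ZFSet.mk (plift0 b) ↔ ZFSet.mk a ∈ ZFSet.mk b
  rw [ZFSet.mk_mem_iff, ZFSet.mk_mem_iff]
  exact ⟨mem_plift0_rev, mem_plift0⟩

theorem zlift_inj {x y : ZFSet.{0}} (h : zlift.{v} x = zlift.{v} y) : x = y := by
  revert h
  refine Quotient.inductionOn₂ x y fun a b h => ?_
  exact Quotient.sound (plift0_equiv_rev (Quotient.exact h))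

theorem mem_zlift_elim {z : ZFSet.{v}} {y : ZFSet.{0}} (h : z ∈ zlift.{v} y) :
    ∃ x : ZFSet.{0}, x ∈ y ∧ z = zlift.{v} x := by
  revert h
  refine Quotient.inductionOn₂ z y fun a b h => ?_
  have h' : a ∈ plift0.{v} b := (ZFSet.mk_mem_iff).1 h
  rcases mem_plift0_elim h' with ⟨x, hx, hequiv⟩
  exact ⟨ZFSet.mk x, ZFSet.mk_mem_iff.2 hx, Quotient.sound hequiv⟩

theorem rank_zlift (x : ZFSet.{0}) : (zlift.{v} x).rank = Ordinal.lift.{v, 0} x.rank := by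
  induction x using ZFSet.inductionOn with
  | _ x IH =>
    apply le_antisymm
    · rw [ZFSet.rank_le_iff]
      intro z hz
      rcases mem_zlift_elim hz with ⟨u, hu, rfl⟩
      rw [IH u hu]
      exact Ordinal.lift_lt.2 (ZFSet.rank_lt_of_mem hu)
    · refine le_of_forall_lt fun c hc => ?_
      rcases Ordinal.lt_lift_iff.1 hc with ⟨o, ho, rfl⟩
      rcases ZFSet.lt_rank_iff.1 ho with ⟨y, hy, hoy⟩
      calc Ordinal.lift.{v, 0} o ≤ Ordinal.lift.{v, 0} y.rank := Ordinal.lift_le.2 hoy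
        _ = (zlift.{v} y).rank := (IH y hy).symm
        _ < (zlift.{v} x).rank := ZFSet.rank_lt_of_mem (zlift_mem_zlift.2 hy)

theorem zlift_transitive {x : ZFSet.{0}} (h : x.IsTransitive) :
    (zlift.{v} x).IsTransitive := by
  intro y hy
  rcases mem_zlift_elim hy with ⟨b, hb, rfl⟩
  refine zsubset_iff.2 fun z hz => ?_
  rcases mem_zlift_elim hz with ⟨c, hc, rfl⟩
  exact zlift_mem_zlift.2 (h.mem_trans hc hb)

theorem zlift_isOrd {x : ZFSet.{0}} (h : IsOrd x) : IsOrd (zlift.{v} x) := by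
  refine ⟨zlift_transitive h.1, fun y hy => ?_⟩
  rcases mem_zlift_elim hy with ⟨b, hb, rfl⟩
  exact zlift_transitive (h.2 b hb)

theorem zlift_surj_of_rank {a : ZFSet.{0}} :
    ∀ w : ZFSet.{v}, w.rank < Ordinal.lift.{v, 0} a.rank →
      ∃ u : ZFSet.{0}, u.rank < a.rank ∧ zlift.{v} u = w := by
  intro w
  induction w using ZFSet.inductionOn with
  | _ w IH =>
    intro hw
    set u : ZFSet.{0} := ZFSet.sep (fun u => zlift.{v} u ∈ w) (Vzf a) with hu
    have heq : zlift.{v} u = w := by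
      apply ZFSet.ext
      intro z
      constructor
      · intro hz
        rcases mem_zlift_elim hz with ⟨c, hc, rfl⟩
        exact (ZFSet.mem_sep.1 hc).2
      · intro hz
        have hzrank : z.rank < Ordinal.lift.{v, 0} a.rank :=
          lt_trans (ZFSet.rank_lt_of_mem hz) hw
        rcases IH z hz hzrank with ⟨c, hc, rfl⟩
        exact zlift_mem_zlift.2 (ZFSet.mem_sep.2 ⟨mem_Vzf.2 hc, hz⟩)
    refine ⟨u, ?_, heq⟩
    have : Ordinal.lift.{v, 0} u.rank < Ordinal.lift.{v, 0} a.rank := by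
      rw [← rank_zlift, heq]
      exact hw
    exact Ordinal.lift_lt.1 this

/-- lift the conclusion of the main theorem to an arbitrary universe -/
theorem lift_result {M : Set ZFSet.{0}}
    (h : ∃ (γ₀ : ZFSet.{0}) (π₀ : ZFSet.{0} → ZFSet.{0}), IsOrd γ₀ ∧
      Set.BijOn π₀ M (VSet γ₀) ∧ ∀ x ∈ M, ∀ y ∈ M, (x ∈ y ↔ π₀ x ∈ π₀ y)) :
    ∃ (γ : ZFSet.{v}) (π : ZFSet.{0} → ZFSet.{v}), IsOrd γ ∧
      Set.BijOn π M (VSet γ) ∧ ∀ x ∈ M, ∀ y ∈ M, (x ∈ y ↔ π x ∈ π y) := by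
  rcases h with ⟨γ₀, π₀, hγ₀, ⟨hm₀, hi₀, hs₀⟩, hiff₀⟩
  refine ⟨zlift.{v} γ₀, fun x => zlift.{v} (π₀ x), zlift_isOrd hγ₀, ⟨?_, ?_, ?_⟩, ?_⟩
  · intro x hx
    show (zlift.{v} (π₀ x)).rank < (zlift.{v} γ₀).rank
    rw [rank_zlift, rank_zlift]
    exact Ordinal.lift_lt.2 (hm₀ hx)
  · intro x hx y hy hxy
    exact hi₀ hx hy (zlift_inj hxy)
  · intro w hw
    have hw' : w.rank < Ordinal.lift.{v, 0} γ₀.rank := by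
      have : w.rank < (zlift.{v} γ₀).rank := hw
      rwa [rank_zlift] at this
    rcases zlift_surj_of_rank w hw' with ⟨u, hu, rfl⟩
    rcases hs₀ (show u ∈ VSet γ₀ from hu) with ⟨x, hxM, rfl⟩
    exact ⟨x, hxM, rfl⟩
  · intro x hx y hy
    rw [hiff₀ x hx y hy]
    exact zlift_mem_zlift.symm

end ZLift
/-- Lemma 3.3 (Magidor): `M ≺ V_λ` is an `ℵ₀`-guessing model iff its transitive
collapse is `V_γ` for some ordinal `γ`. -/
theorem guessing_iff_collapse_rank_segment (lam : ZFSet) (hlam : IsOrd lam)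
    (M : Set ZFSet) (hM : Prec M (VSet lam)) :
    GuessingModel M ℵ₀ ↔
      ∃ (γ : ZFSet) (π : ZFSet → ZFSet), IsOrd γ ∧ Set.BijOn π M (VSet γ) ∧
        ∀ x ∈ M, ∀ y ∈ M, (x ∈ y ↔ π x ∈ π y) :=
  ⟨fun hG => lift_result (forward_all lam.rank lam rfl hlam M hM hG),
   fun h => backward hM h⟩

end GuessingModels
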